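/- arXiv:0711.1887 — 6 statements merged into one kernel-verified Lean document; each statement's English description precedes it below -/
import Mathlib

section
/- Let a, b > 0 and let π_{a,b} denote the Beta(2a,2b) distribution on [0,1]. Then for every continuously differentiable function f : ℝ → ℝ (restricted to [0,1]), the Poincaré inequality ∫_0^1 f(x)² π_{a,b}(dx) ≤ (1/(a+b)) ∫_0^1 x(1-x) f'(x)² π_{a,b}(dx) + (∫_0^1 f(x) π_{a,b}(dx))² holds. Equivalently, the operator r(1-r) d²/dr² + (a-(a+b)r) d/dr on [0,1] has spectral gap at least a+b in L²(π_{a,b}). -/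
open MeasureTheory Set
open scoped Classical NNReal ENNReal Interval
set_option maxHeartbeats 1600000

/-- The Beta(a,b) distribution on [0,1]. -/
noncomputable def betaMeasure (a b : ℝ) : Measure ℝ :=
  (volume.restrict (Icc (0:ℝ) 1)).withDensity fun x =>
    ENNReal.ofReal (Real.Gamma (a + b) / (Real.Gamma a * Real.Gamma b)
      * x ^ (a - 1) * (1 - x) ^ (b - 1))

namespace WFAux

/-- normalizing constant -/
noncomputable def Cst (α β : ℝ) : ℝ := Real.Gamma (α + β) / (Real.Gamma α * Real.Gamma β)

/-- the beta density -/
noncomputable def rho (α β : ℝ) (x : ℝ) : ℝ := Cst α β * x ^ (α - 1) * (1 - x) ^ (β - 1)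

variable {α β : ℝ}

lemma measurable_rho : Measurable (rho α β) := by
  unfold rho; fun_prop

lemma Cst_pos (hα : 0 < α) (hβ : 0 < β) : 0 < Cst α β :=
  div_pos (Real.Gamma_pos_of_pos (by linarith)) (mul_pos (Real.Gamma_pos_of_pos hα) (Real.Gamma_pos_of_pos hβ))

lemma rho_nonneg (hα : 0 < α) (hβ : 0 < β) {x : ℝ} (h0 : 0 ≤ x) (h1 : x ≤ 1) :
    0 ≤ rho α β x := by
  have := Cst_pos hα hβ
  unfold rho
  have h2 : (0:ℝ) ≤ x ^ (α - 1) := Real.rpow_nonneg h0 _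
  have h3 : (0:ℝ) ≤ (1 - x) ^ (β - 1) := Real.rpow_nonneg (by linarith) _
  positivity

/-- the beta integrand agrees with the complex one on [0,1] -/
lemma complex_eq {x : ℝ} (hx : 0 ≤ x) (hx1 : x ≤ 1) :
    ((x:ℂ) ^ ((α:ℂ) - 1) * (1 - (x:ℂ)) ^ ((β:ℂ) - 1)) = ((x ^ (α-1) * (1-x) ^ (β-1) : ℝ) : ℂ) := by
  rw [Complex.ofReal_mul, Complex.ofReal_cpow hx, Complex.ofReal_cpow (by linarith)]
  push_cast
  ring_nf

lemma integrableOn_beta_integrand (hα : 0 < α) (hβ : 0 < β) :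
    IntegrableOn (fun x : ℝ => x ^ (α-1) * (1-x) ^ (β-1)) (Ioo 0 1) := by
  have h := Complex.betaIntegral_convergent (u := (α:ℂ)) (v := (β:ℂ))
    (by simpa using hα) (by simpa using hβ)
  have h2 : IntegrableOn (fun x : ℝ => (x:ℂ) ^ ((α:ℂ) - 1) * (1 - (x:ℂ)) ^ ((β:ℂ) - 1)) (Ioc 0 1) := by
    simpa [intervalIntegrable_iff_integrableOn_Ioc_of_le] using h
  have h3 := (h2.mono_set Ioo_subset_Ioc_self)
  have h4 : IntegrableOn
      (fun x : ℝ => Complex.re ((x:ℂ) ^ ((α:ℂ) - 1) * (1 - (x:ℂ)) ^ ((β:ℂ) - 1))) (Ioo 0 1) :=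
    h3.re
  refine h4.congr_fun ?_ measurableSet_Ioo
  intro x hx
  show Complex.re _ = _
  rw [complex_eq (α := α) (β := β) hx.1.le hx.2.le, Complex.ofReal_re]

lemma integrableOn_rho (hα : 0 < α) (hβ : 0 < β) :
    IntegrableOn (rho α β) (Ioo 0 1) := by
  have h : IntegrableOn (fun x : ℝ => Cst α β * (x ^ (α-1) * (1-x) ^ (β-1))) (Ioo 0 1) :=
    (integrableOn_beta_integrand hα hβ).const_mul (Cst α β)
  refine h.congr_fun ?_ measurableSet_Ioo
  intro x _; unfold rho; ring

lemma real_betaIntegral (hα : 0 < α) (hβ : 0 < β) :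
    ∫ x in Ioo (0:ℝ) 1, x ^ (α-1) * (1-x) ^ (β-1)
      = Real.Gamma α * Real.Gamma β / Real.Gamma (α+β) := by
  have h := Complex.Gamma_mul_Gamma_eq_betaIntegral (s := (α:ℂ)) (t := (β:ℂ))
    (by simpa using hα) (by simpa using hβ)
  rw [Complex.Gamma_ofReal, Complex.Gamma_ofReal] at h
  have hcoe : ((α:ℂ) + β) = ((α + β : ℝ) : ℂ) := by push_cast; ring
  rw [hcoe, Complex.Gamma_ofReal] at h
  have hB : Complex.betaIntegral (α:ℂ) (β:ℂ)
      = ((∫ x in (0:ℝ)..1, x ^ (α-1) * (1-x) ^ (β-1) : ℝ) : ℂ) := by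
    rw [Complex.betaIntegral]
    rw [show (∫ x in (0:ℝ)..1, (x:ℂ) ^ ((α:ℂ) - 1) * (1 - (x:ℂ)) ^ ((β:ℂ) - 1))
        = ∫ x in (0:ℝ)..1, ((x ^ (α-1) * (1-x) ^ (β-1) : ℝ) : ℂ) from
      intervalIntegral.integral_congr fun x hx => by
        rw [uIcc_of_le (by norm_num)] at hx
        exact complex_eq hx.1 hx.2]
    exact intervalIntegral.integral_ofReal
  rw [hB] at h
  have hΓ : Real.Gamma (α + β) ≠ 0 := (Real.Gamma_pos_of_pos (by linarith)).ne'
  have h' : Real.Gamma α * Real.Gamma β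
      = Real.Gamma (α+β) * ∫ x in (0:ℝ)..1, x ^ (α-1) * (1-x) ^ (β-1) := by
    exact_mod_cast h
  rw [intervalIntegral.integral_of_le (by norm_num), integral_Ioc_eq_integral_Ioo] at h'
  field_simp [h'] 
  rw [h']; ring

lemma mass_one (hα : 0 < α) (hβ : 0 < β) :
    ∫ x in Ioo (0:ℝ) 1, rho α β x = 1 := by
  have : ∫ x in Ioo (0:ℝ) 1, rho α β x
      = Cst α β * ∫ x in Ioo (0:ℝ) 1, x ^ (α-1) * (1-x) ^ (β-1) := by
    rw [← integral_const_mul]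
    refine setIntegral_congr_fun measurableSet_Ioo fun x _ => ?_
    unfold rho; ring
  rw [this, real_betaIntegral hα hβ]
  unfold Cst
  have h1 : Real.Gamma (α + β) ≠ 0 := (Real.Gamma_pos_of_pos (by linarith)).ne'
  have h2 : Real.Gamma α ≠ 0 := (Real.Gamma_pos_of_pos hα).ne'
  have h3 : Real.Gamma β ≠ 0 := (Real.Gamma_pos_of_pos hβ).ne'
  field_simp


noncomputable def phi (α β : ℝ) (t : ℝ) : ℝ := Cst α β / (α + β) * (t ^ α * (1 - t) ^ β)

variable {α β : ℝ}


lemma continuous_rpow_pos (hα : 0 < α) : Continuous fun t : ℝ => t ^ α := by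
  rw [continuous_iff_continuousAt]
  intro x
  exact Real.continuousAt_rpow_const x α (Or.inr hα.le)

lemma continuous_phi (hα : 0 < α) (hβ : 0 < β) : Continuous (phi α β) := by
  unfold phi
  exact continuous_const.mul ((continuous_rpow_pos hα).mul
    ((continuous_rpow_pos hβ).comp (continuous_const.sub continuous_id)))

lemma hasDerivAt_phi (hα : 0 < α) (hβ : 0 < β) {t : ℝ} (ht : t ∈ Ioo (0:ℝ) 1) :
    HasDerivAt (phi α β) ((α / (α + β) - t) * rho α β t) t := by
  obtain ⟨ht0, ht1⟩ := ht
  have h1t : (0:ℝ) < 1 - t := by linarith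
  have h1 : HasDerivAt (fun t : ℝ => t ^ α) (α * t ^ (α - 1)) t :=
    Real.hasDerivAt_rpow_const (Or.inl ht0.ne')
  have h2 : HasDerivAt (fun t : ℝ => (1 - t) ^ β) ((-1) * β * (1 - t) ^ (β - 1)) t := by
    have hbase : HasDerivAt (fun t : ℝ => 1 - t) (-1) t := by
      simpa using (hasDerivAt_id t).const_sub (1:ℝ)
    exact hbase.rpow_const (Or.inl h1t.ne')
  have h3 := ((h1.mul h2).const_mul (Cst α β / (α + β)))
  refine h3.congr_deriv ?_
  have e1 : t ^ α = t ^ (α - 1) * t := by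
    rw [show α = (α - 1) + 1 by ring, Real.rpow_add ht0, Real.rpow_one]; ring_nf
  have e2 : (1 - t) ^ β = (1 - t) ^ (β - 1) * (1 - t) := by
    rw [show β = (β - 1) + 1 by ring, Real.rpow_add h1t, Real.rpow_one]; ring_nf
  rw [e1, e2]
  unfold rho
  have hab : α + β ≠ 0 := by positivity
  field_simp
  ring

lemma phi_eq (hα : 0 < α) (hβ : 0 < β) {t : ℝ} (ht : t ∈ Ioo (0:ℝ) 1) :
    phi α β t = 1 / (α + β) * (t * (1 - t) * rho α β t) := by
  obtain ⟨ht0, ht1⟩ := ht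
  have h1t : (0:ℝ) < 1 - t := by linarith
  have e1 : t ^ α = t ^ (α - 1) * t := by
    rw [show α = (α - 1) + 1 by ring, Real.rpow_add ht0, Real.rpow_one]; ring_nf
  have e2 : (1 - t) ^ β = (1 - t) ^ (β - 1) * (1 - t) := by
    rw [show β = (β - 1) + 1 by ring, Real.rpow_add h1t, Real.rpow_one]; ring_nf
  unfold phi rho
  rw [e1, e2]
  ring

lemma phi_one (hβ : 0 < β) : phi α β 1 = 0 := by
  unfold phi
  rw [sub_self, Real.zero_rpow hβ.ne']
  ring

lemma phi_zero (hα : 0 < α) : phi α β 0 = 0 := by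
  unfold phi
  rw [Real.zero_rpow hα.ne']
  ring


/-- integrability of a bounded (on (0,1)) measurable function times rho -/
lemma integrable_bdd_rho (hα : 0 < α) (hβ : 0 < β) {h : ℝ → ℝ} (hm : Measurable h)
    {M : ℝ} (hM : ∀ x ∈ Ioo (0:ℝ) 1, |h x| ≤ M) :
    IntegrableOn (fun x => h x * rho α β x) (Ioo 0 1) := by
  refine Integrable.mono' ((integrableOn_rho hα hβ).const_mul M)
    ((hm.mul measurable_rho).aestronglyMeasurable) ?_
  filter_upwards [ae_restrict_mem measurableSet_Ioo] with x hx
  have h0 := rho_nonneg hα hβ hx.1.le hx.2.le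
  have := hM x hx
  rw [Real.norm_eq_abs, abs_mul, abs_of_nonneg h0]
  exact mul_le_mul_of_nonneg_right this h0

lemma integrableOn_sub_Ioc (hα : 0 < α) (hβ : 0 < β) {h : ℝ → ℝ} (hm : Measurable h)
    {M : ℝ} (hM : ∀ x ∈ Ioo (0:ℝ) 1, |h x| ≤ M) {t : ℝ} (ht : 0 ≤ t) :
    IntegrableOn (fun x => h x * rho α β x) (Ioc t 1) := by
  have h1 : IntegrableOn (fun x => h x * rho α β x) (Ioo t 1) :=
    (integrable_bdd_rho hα hβ hm hM).mono_set (fun x hx => ⟨lt_of_le_of_lt ht hx.1, hx.2⟩)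
  rwa [IntegrableOn, ← Measure.restrict_congr_set Ioo_ae_eq_Ioc]

/-- the Stein-kernel identity `∫_t^1 (x - α/(α+β)) ρ(x) dx = φ(t)` -/
lemma star_identity (hα : 0 < α) (hβ : 0 < β) {t : ℝ} (ht0 : 0 ≤ t) (ht1 : t ≤ 1) :
    (∫ x in Ioo t 1, x * rho α β x) - (α / (α + β)) * ∫ x in Ioo t 1, rho α β x
      = phi α β t := by
  have hid : Measurable fun x : ℝ => x := measurable_id
  have hI1 : IntegrableOn (fun x => x * rho α β x) (Ioc t 1) :=
    integrableOn_sub_Ioc hα hβ hid (M := 1)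
      (fun x hx => by rw [abs_of_nonneg hx.1.le]; exact hx.2.le) ht0
  have hI2 : IntegrableOn (fun x => (1:ℝ) * rho α β x) (Ioc t 1) :=
    integrableOn_sub_Ioc hα hβ measurable_const (M := 1)
      (fun x _ => by norm_num) ht0
  have hI2' : IntegrableOn (rho α β) (Ioc t 1) := by simpa using hI2
  have hftc : ∫ x in t..1, (α / (α + β) - x) * rho α β x = phi α β 1 - phi α β t := by
    refine intervalIntegral.integral_eq_sub_of_hasDeriv_right_of_le ht1
      ((continuous_phi hα hβ).continuousOn) ?_ ?_
    · intro x hx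
      exact (hasDerivAt_phi hα hβ ⟨lt_of_le_of_lt ht0 hx.1, hx.2⟩).hasDerivWithinAt
    · rw [intervalIntegrable_iff_integrableOn_Ioc_of_le ht1]
      have : IntegrableOn (fun x => (α / (α + β) - x) * rho α β x) (Ioc t 1) := by
        have h5 : IntegrableOn ((fun x => α / (α + β) * rho α β x) - fun x => x * rho α β x) (Ioc t 1) :=
          (hI2'.const_mul (α / (α + β))).sub hI1
        refine h5.congr_fun (fun x _ => by simp; ring) measurableSet_Ioc
      exact this
  rw [phi_one hβ] at hftc
  rw [intervalIntegral.integral_of_le ht1] at hftc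
  have hsplit : ∫ x in Ioc t 1, (α / (α + β) - x) * rho α β x
      = (α / (α + β)) * (∫ x in Ioc t 1, rho α β x) - ∫ x in Ioc t 1, x * rho α β x := by
    rw [← integral_const_mul, ← integral_sub ((hI2'.const_mul _)) hI1]
    exact setIntegral_congr_fun measurableSet_Ioc (fun x _ => by ring)
  rw [hsplit] at hftc
  rw [integral_Ioc_eq_integral_Ioo, integral_Ioc_eq_integral_Ioo] at hftc
  linarith

/-- the main kernel identity -/
lemma kernel_identity (hα : 0 < α) (hβ : 0 < β) {t : ℝ} (ht : t ∈ Ioo (0:ℝ) 1) :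
    (∫ x in Ioo t 1, x * rho α β x) * (∫ x in Ioo 0 t, rho α β x)
      - (∫ x in Ioo t 1, rho α β x) * (∫ x in Ioo 0 t, x * rho α β x)
      = phi α β t := by
  obtain ⟨ht0, ht1⟩ := ht
  -- split facts
  have hIρ : IntegrableOn (rho α β) (Ioo 0 1) := integrableOn_rho hα hβ
  have hIxρ : IntegrableOn (fun x => x * rho α β x) (Ioo 0 1) :=
    integrable_bdd_rho hα hβ measurable_id (M := 1)
      (fun x hx => by rw [abs_of_nonneg hx.1.le]; exact hx.2.le)
  have hunion : Ioo (0:ℝ) t ∪ Ico t 1 = Ioo 0 1 := by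
    ext x
    simp only [mem_union, mem_Ioo, mem_Ico]
    constructor
    · rintro (⟨h1, h2⟩ | ⟨h1, h2⟩) <;> constructor <;> linarith
    · rintro ⟨h1, h2⟩
      rcases lt_or_ge x t with h | h
      · exact Or.inl ⟨h1, h⟩
      · exact Or.inr ⟨h, h2⟩
  have hdisj : Disjoint (Ioo (0:ℝ) t) (Ico t 1) := by
    rw [Set.disjoint_left]
    rintro x ⟨_, h2⟩ ⟨h3, _⟩
    linarith
  have hsub1 : Ioo (0:ℝ) t ⊆ Ioo 0 1 := fun x hx => ⟨hx.1, lt_trans hx.2 ht1⟩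
  have hsub2 : Ico (t:ℝ) 1 ⊆ Ioo 0 1 := fun x hx => ⟨lt_of_lt_of_le ht0 hx.1, hx.2⟩
  have split : ∀ (h : ℝ → ℝ), IntegrableOn h (Ioo 0 1) →
      ∫ x in Ioo 0 1, h x = (∫ x in Ioo 0 t, h x) + ∫ x in Ioo t 1, h x := by
    intro h hI
    rw [← hunion, setIntegral_union hdisj measurableSet_Ico
      (hI.mono_set hsub1) (hI.mono_set hsub2), integral_Ico_eq_integral_Ioo]
  have hmass := mass_one hα hβ
  have hF : ∫ x in Ioo (0:ℝ) t, rho α β x = 1 - ∫ x in Ioo t 1, rho α β x := by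
    have := split _ hIρ; rw [hmass] at this; linarith
  have hmean : ∫ x in Ioo (0:ℝ) 1, x * rho α β x = α / (α + β) := by
    have h0 := star_identity hα hβ (le_refl (0:ℝ)) zero_le_one
    rw [phi_zero hα] at h0
    rw [show Ioo (0:ℝ) 1 = Ioo 0 1 from rfl] at h0 ⊢
    rw [hmass] at h0
    linarith
  have hS0 : ∫ x in Ioo (0:ℝ) t, x * rho α β x
      = α / (α + β) - ∫ x in Ioo t 1, x * rho α β x := by
    have := split _ hIxρ; rw [hmean] at this; linarith
  have hstar := star_identity hα hβ ht0.le ht1.le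
  rw [hF, hS0]
  ring_nf
  ring_nf at hstar
  linarith

/-- Cauchy-Schwarz: `(∫_{(y,x]} g)² ≤ (x-y) ∫_{(y,x]} g²` -/
lemma cs_aux {g : ℝ → ℝ} (hg : Continuous g) {y x : ℝ} (hyx : y ≤ x) :
    (∫ t in Ioc y x, g t) ^ 2 ≤ (x - y) * ∫ t in Ioc y x, g t ^ 2 := by
  rcases eq_or_lt_of_le hyx with h | h
  · subst h; simp
  have hm : (0:ℝ) < x - y := by linarith
  have hIg : IntegrableOn g (Ioc y x) := hg.integrableOn_Ioc
  have hIg2 : IntegrableOn (fun t => g t ^ 2) (Ioc y x) := (hg.pow 2).integrableOn_Ioc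
  set c : ℝ := (∫ t in Ioc y x, g t) / (x - y) with hc
  have h0 : 0 ≤ ∫ t in Ioc y x, (g t - c) ^ 2 :=
    integral_nonneg fun t => sq_nonneg _
  have hexp : ∫ t in Ioc y x, (g t - c) ^ 2
      = (∫ t in Ioc y x, g t ^ 2) - 2 * c * (∫ t in Ioc y x, g t) + c ^ 2 * (x - y) := by
    have e : ∀ t : ℝ, (g t - c) ^ 2 = g t ^ 2 - (2 * c) * g t + c ^ 2 := fun t => by ring
    rw [show (fun t => (g t - c) ^ 2) = fun t => g t ^ 2 - (2 * c) * g t + c ^ 2 from funext e]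
    have hI3 : IntegrableOn (fun t => g t ^ 2 - (2 * c) * g t) (Ioc y x) := hIg2.sub (hIg.const_mul (2 * c))
    have hI4 : IntegrableOn (fun _ : ℝ => c ^ 2) (Ioc y x) := integrableOn_const measure_Ioc_lt_top.ne
    rw [integral_add hI3 hI4, integral_sub hIg2 (hIg.const_mul (2 * c)), integral_const_mul, setIntegral_const]
    rw [measureReal_def, Real.volume_Ioc, ENNReal.toReal_ofReal hm.le, smul_eq_mul]
    field_simp
  rw [hexp] at h0
  have hc2 : c * (x - y) = ∫ t in Ioc y x, g t := by
    rw [hc, div_mul_cancel₀ _ hm.ne']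
  nlinarith [h0, sq_nonneg c]

/-- pointwise bound `(f x - f y)² ≤ |x - y| ∫_{Ι y x} (f')²` for C¹ f -/
lemma cs_bound {f : ℝ → ℝ} (hf : ContDiff ℝ 1 f) (x y : ℝ) :
    (f x - f y) ^ 2 ≤ |x - y| * ∫ t in uIoc y x, deriv f t ^ 2 := by
  have hg : Continuous (deriv f) := hf.continuous_deriv le_rfl
  have key : ∀ u v : ℝ, u ≤ v → (f v - f u) ^ 2 ≤ (v - u) * ∫ t in Ioc u v, deriv f t ^ 2 := by
    intro u v huv
    have hftc : f v - f u = ∫ t in Ioc u v, deriv f t := by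
      rw [← intervalIntegral.integral_of_le huv]
      exact (intervalIntegral.integral_deriv_eq_sub (fun t _ => hf.differentiable one_ne_zero t)
        (hg.intervalIntegrable u v)).symm
    rw [hftc]
    exact cs_aux hg huv
  rcases le_total y x with h | h
  · rw [uIoc_of_le h, abs_of_nonneg (by linarith)]
    exact key y x h
  · rw [uIoc_of_ge h, abs_of_nonpos (by linarith)]
    have := key x y h
    calc (f x - f y) ^ 2 = (f y - f x) ^ 2 := by ring
    _ ≤ (y - x) * ∫ t in Ioc x y, deriv f t ^ 2 := this
    _ = -(x - y) * ∫ t in Ioc x y, deriv f t ^ 2 := by ring_nf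

lemma split_Ioo {t : ℝ} (ht : t ∈ Ioo (0:ℝ) 1) {h : ℝ → ℝ} (hI : IntegrableOn h (Ioo 0 1)) :
    ∫ x in Ioo (0:ℝ) 1, h x = (∫ x in Ioo 0 t, h x) + ∫ x in Ico t 1, h x := by
  obtain ⟨ht0, ht1⟩ := ht
  have hunion : Ioo (0:ℝ) t ∪ Ico t 1 = Ioo 0 1 := by
    ext x
    simp only [mem_union, mem_Ioo, mem_Ico]
    constructor
    · rintro (⟨h1, h2⟩ | ⟨h1, h2⟩) <;> constructor <;> linarith
    · rintro ⟨h1, h2⟩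
      rcases lt_or_ge x t with h | h
      · exact Or.inl ⟨h1, h⟩
      · exact Or.inr ⟨h, h2⟩
  have hdisj : Disjoint (Ioo (0:ℝ) t) (Ico t 1) := by
    rw [Set.disjoint_left]
    rintro x ⟨_, h2⟩ ⟨h3, _⟩
    linarith
  have hsub1 : Ioo (0:ℝ) t ⊆ Ioo 0 1 := fun x hx => ⟨hx.1, lt_trans hx.2 ht1⟩
  have hsub2 : Ico (t:ℝ) 1 ⊆ Ioo 0 1 := fun x hx => ⟨lt_of_lt_of_le ht0 hx.1, hx.2⟩
  rw [← hunion, setIntegral_union hdisj measurableSet_Ico (hI.mono_set hsub1) (hI.mono_set hsub2)]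

lemma if_lt_integral {t : ℝ} (ht1 : t ≤ 1) (k : ℝ → ℝ) :
    ∫ y in Ioo (0:ℝ) 1, (if y < t then k y else 0) = ∫ y in Ioo 0 t, k y := by
  have e : (fun y => if y < t then k y else 0) = (Iio t).indicator k := by
    funext y
    by_cases h : y < t
    · rw [if_pos h, Set.indicator_of_mem (mem_Iio.2 h)]
    · rw [if_neg h, Set.indicator_of_notMem (fun hc => h (mem_Iio.1 hc))]
  have hset : Iio t ∩ Ioo 0 1 = Ioo (0:ℝ) t := by
    ext y
    simp only [mem_inter_iff, mem_Iio, mem_Ioo]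
    constructor
    · rintro ⟨h1, h2, h3⟩; exact ⟨h2, h1⟩
    · rintro ⟨h1, h2⟩; exact ⟨h2, h1, by linarith⟩
  rw [e, integral_indicator measurableSet_Iio, Measure.restrict_restrict measurableSet_Iio, hset]

lemma if_ge_integral {t : ℝ} (ht0 : 0 < t) (k : ℝ → ℝ) :
    ∫ y in Ioo (0:ℝ) 1, (if t ≤ y then k y else 0) = ∫ y in Ico t 1, k y := by
  have e : (fun y => if t ≤ y then k y else 0) = (Ici t).indicator k := by
    funext y
    by_cases h : t ≤ y
    · rw [if_pos h, Set.indicator_of_mem (mem_Ici.2 h)]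
    · rw [if_neg h, Set.indicator_of_notMem (fun hc => h (mem_Ici.1 hc))]
  have hset : Ici t ∩ Ioo 0 1 = Ico (t:ℝ) 1 := by
    ext y
    simp only [mem_inter_iff, mem_Ici, mem_Ioo, mem_Ico]
    constructor
    · rintro ⟨h1, h2, h3⟩; exact ⟨h1, h3⟩
    · rintro ⟨h1, h2⟩; exact ⟨h1, by linarith, h2⟩
  rw [e, integral_indicator measurableSet_Ici, Measure.restrict_restrict measurableSet_Ici, hset]

/-- evaluation of the kernel weight -/
lemma W_eval (hα : 0 < α) (hβ : 0 < β) {t : ℝ} (ht : t ∈ Ioo (0:ℝ) 1) :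
    ∫ z, (if t ∈ Ι z.2 z.1 then |z.1 - z.2| * (rho α β z.1 * rho α β z.2) else 0)
        ∂((volume.restrict (Ioo (0:ℝ) 1)).prod (volume.restrict (Ioo (0:ℝ) 1)))
      = 2 * phi α β t := by
  obtain ⟨ht0, ht1⟩ := ht
  set ρ := rho α β with hρ
  set F := ∫ x in Ioo (0:ℝ) t, ρ x with hF
  set S0 := ∫ x in Ioo (0:ℝ) t, x * ρ x with hS0
  set G := ∫ x in Ioo (t:ℝ) 1, ρ x with hG
  set S1 := ∫ x in Ioo (t:ℝ) 1, x * ρ x with hS1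
  have hIρ : IntegrableOn ρ (Ioo 0 1) := integrableOn_rho hα hβ
  have hIxρ : IntegrableOn (fun x => x * ρ x) (Ioo 0 1) :=
    integrable_bdd_rho hα hβ measurable_id (M := 1)
      (fun x hx => by rw [abs_of_nonneg hx.1.le]; exact hx.2.le)
  have hsub1 : Ioo (0:ℝ) t ⊆ Ioo 0 1 := fun x hx => ⟨hx.1, lt_trans hx.2 ht1⟩
  have hsub2 : Ico (t:ℝ) 1 ⊆ Ioo 0 1 := fun x hx => ⟨lt_of_lt_of_le ht0 hx.1, hx.2⟩
  -- the inner integral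
  have hinner : ∀ x : ℝ,
      (∫ y in Ioo (0:ℝ) 1, (if t ∈ Ι y x then |x - y| * (ρ x * ρ y) else 0))
        = if t ≤ x then ρ x * (x * F - S0) else ρ x * (S1 - x * G) := by
    intro x
    by_cases hx : t ≤ x
    · rw [if_pos hx]
      have e : ∀ y : ℝ, (if t ∈ Ι y x then |x - y| * (ρ x * ρ y) else 0)
          = if y < t then ρ x * (x * ρ y - y * ρ y) else 0 := by
        intro y
        by_cases hy : y < t
        · rw [if_pos hy, if_pos, abs_of_nonneg (by linarith)]
          · ring
          · exact mem_uIoc.2 (Or.inl ⟨hy, hx⟩)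
        · rw [if_neg hy, if_neg]
          intro hmem
          rcases mem_uIoc.1 hmem with ⟨h1, h2⟩ | ⟨h1, h2⟩
          · exact hy h1
          · linarith
      rw [show (fun y => if t ∈ Ι y x then |x - y| * (ρ x * ρ y) else 0)
          = fun y => if y < t then ρ x * (x * ρ y - y * ρ y) else 0 from funext e]
      rw [if_lt_integral ht1.le]
      have hIs : IntegrableOn (fun y => x * ρ y) (Ioo 0 t) := (hIρ.mono_set hsub1).const_mul x
      have hIs2 : IntegrableOn (fun y => y * ρ y) (Ioo 0 t) := hIxρ.mono_set hsub1
      rw [show (fun y => ρ x * (x * ρ y - y * ρ y)) = fun y => ρ x * (x * ρ y - y * ρ y) from rfl]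
      calc ∫ y in Ioo (0:ℝ) t, ρ x * (x * ρ y - y * ρ y)
          = ρ x * ∫ y in Ioo (0:ℝ) t, (x * ρ y - y * ρ y) := integral_const_mul _ _
        _ = ρ x * (x * F - S0) := by
            rw [integral_sub hIs hIs2, integral_const_mul]
    · rw [if_neg hx]
      push_neg at hx
      have e : ∀ y : ℝ, (if t ∈ Ι y x then |x - y| * (ρ x * ρ y) else 0)
          = if t ≤ y then ρ x * (y * ρ y - x * ρ y) else 0 := by
        intro y
        by_cases hy : t ≤ y
        · rw [if_pos hy, if_pos, abs_of_nonpos (by linarith)]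
          · ring
          · exact mem_uIoc.2 (Or.inr ⟨hx, hy⟩)
        · rw [if_neg hy, if_neg]
          intro hmem
          rcases mem_uIoc.1 hmem with ⟨h1, h2⟩ | ⟨h1, h2⟩
          · linarith
          · exact hy h2
      rw [show (fun y => if t ∈ Ι y x then |x - y| * (ρ x * ρ y) else 0)
          = fun y => if t ≤ y then ρ x * (y * ρ y - x * ρ y) else 0 from funext e]
      rw [if_ge_integral ht0]
      have hIs : IntegrableOn (fun y => x * ρ y) (Ico t 1) := (hIρ.mono_set hsub2).const_mul x
      have hIs2 : IntegrableOn (fun y => y * ρ y) (Ico t 1) := hIxρ.mono_set hsub2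
      calc ∫ y in Ico (t:ℝ) 1, ρ x * (y * ρ y - x * ρ y)
          = ρ x * ∫ y in Ico (t:ℝ) 1, (y * ρ y - x * ρ y) := integral_const_mul _ _
        _ = ρ x * (S1 - x * G) := by
            rw [integral_sub hIs2 hIs, integral_const_mul, integral_Ico_eq_integral_Ioo,
              integral_Ico_eq_integral_Ioo]
  -- integrability of the whole integrand on the product
  have hmeasE : MeasurableSet {p : ℝ × ℝ | t ∈ Ι p.2 p.1} := by
    have : {p : ℝ × ℝ | t ∈ Ι p.2 p.1} = {p : ℝ × ℝ | p.2 ⊓ p.1 < t} ∩ {p : ℝ × ℝ | t ≤ p.2 ⊔ p.1} := by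
      ext p; simp [Set.uIoc, mem_Ioc]
    rw [this]
    exact (measurableSet_lt (measurable_snd.min measurable_fst) measurable_const).inter
      (measurableSet_le measurable_const (measurable_snd.max measurable_fst))
  have hmeas : AEStronglyMeasurable
      (fun z : ℝ × ℝ => if t ∈ Ι z.2 z.1 then |z.1 - z.2| * (ρ z.1 * ρ z.2) else 0)
      ((volume.restrict (Ioo (0:ℝ) 1)).prod (volume.restrict (Ioo (0:ℝ) 1))) := by
    apply Measurable.aestronglyMeasurable
    exact Measurable.ite hmeasE
      (((measurable_fst.sub measurable_snd).abs).mul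
        ((measurable_rho.comp measurable_fst).mul (measurable_rho.comp measurable_snd)))
      measurable_const
  have hInt : Integrable
      (fun z : ℝ × ℝ => if t ∈ Ι z.2 z.1 then |z.1 - z.2| * (ρ z.1 * ρ z.2) else 0)
      ((volume.restrict (Ioo (0:ℝ) 1)).prod (volume.restrict (Ioo (0:ℝ) 1))) := by
    refine Integrable.mono' (Integrable.mul_prod hIρ hIρ) hmeas ?_
    rw [Measure.prod_restrict]
    filter_upwards [ae_restrict_mem (measurableSet_Ioo.prod measurableSet_Ioo)] with z hz
    obtain ⟨hz1, hz2⟩ := hz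
    have h1 := rho_nonneg hα hβ hz1.1.le hz1.2.le
    have h2 := rho_nonneg hα hβ hz2.1.le hz2.2.le
    by_cases hmem : t ∈ Ι z.2 z.1
    · rw [if_pos hmem, Real.norm_eq_abs, abs_mul, abs_abs, abs_mul,
        abs_of_nonneg h1, abs_of_nonneg h2]
      have : |z.1 - z.2| ≤ 1 := by
        rw [abs_le]; constructor <;> [linarith [hz1.1, hz2.2]; linarith [hz1.2, hz2.1] ]
      nlinarith [mul_nonneg h1 h2, abs_nonneg (z.1 - z.2)]
    · rw [if_neg hmem]; simp; positivity
  rw [integral_prod _ hInt]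
  have houter : ∀ x : ℝ, (∫ y in Ioo (0:ℝ) 1, (if t ∈ Ι y x then |x - y| * (ρ x * ρ y) else 0))
      = (fun x => if t ≤ x then ρ x * (x * F - S0) else ρ x * (S1 - x * G)) x := hinner
  rw [integral_congr_ae (Filter.Eventually.of_forall houter)]
  -- outer integral: split at t
  have hIouter : IntegrableOn
      (fun x => if t ≤ x then ρ x * (x * F - S0) else ρ x * (S1 - x * G)) (Ioo 0 1) := by
    have hmeas2 : Measurable fun x => if t ≤ x then x * F - S0 else S1 - x * G := by
      exact Measurable.ite measurableSet_Ici
        ((measurable_id.mul_const F).sub measurable_const)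
        (measurable_const.sub (measurable_id.mul_const G))
    have : IntegrableOn (fun x => (if t ≤ x then x * F - S0 else S1 - x * G) * ρ x) (Ioo 0 1) := by
      refine integrable_bdd_rho hα hβ hmeas2 (M := |F| + |S0| + |S1| + |G|) ?_
      intro x hx
      by_cases hxx : t ≤ x
      · rw [if_pos hxx]
        have : |x * F - S0| ≤ |x * F| + |S0| := abs_sub _ _
        have h2 : |x * F| ≤ |F| := by
          rw [abs_mul]
          nlinarith [abs_nonneg F, abs_of_pos (lt_of_lt_of_le ht0 hxx), hx.2, abs_nonneg (x*F)]
        calc |x * F - S0| ≤ |x * F| + |S0| := abs_sub _ _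
          _ ≤ |F| + |S0| := by linarith
          _ ≤ |F| + |S0| + |S1| + |G| := by linarith [abs_nonneg S1, abs_nonneg G]
      · rw [if_neg hxx]
        have h2 : |x * G| ≤ |G| := by
          rw [abs_mul]
          nlinarith [abs_nonneg G, abs_of_pos hx.1, hx.2, abs_nonneg (x*G)]
        calc |S1 - x * G| ≤ |S1| + |x * G| := abs_sub _ _
          _ ≤ |S1| + |G| := by linarith
          _ ≤ |F| + |S0| + |S1| + |G| := by linarith [abs_nonneg F, abs_nonneg S0]
    refine this.congr_fun (fun x _ => by by_cases hxx : t ≤ x <;> simp [hxx] <;> ring) measurableSet_Ioo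
  rw [split_Ioo ⟨ht0, ht1⟩ hIouter]
  have hpart1 : ∫ x in Ioo (0:ℝ) t, (if t ≤ x then ρ x * (x * F - S0) else ρ x * (S1 - x * G))
      = S1 * F - G * S0 := by
    rw [setIntegral_congr_fun measurableSet_Ioo
      (g := fun x => S1 * ρ x - G * (x * ρ x)) (fun x hx => by rw [if_neg (by linarith [hx.2])]; ring)]
    rw [integral_sub ((hIρ.mono_set hsub1).const_mul S1) ((hIxρ.mono_set hsub1).const_mul G),
      integral_const_mul, integral_const_mul]
  have hpart2 : ∫ x in Ico (t:ℝ) 1, (if t ≤ x then ρ x * (x * F - S0) else ρ x * (S1 - x * G))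
      = F * S1 - S0 * G := by
    rw [setIntegral_congr_fun measurableSet_Ico
      (g := fun x => F * (x * ρ x) - S0 * ρ x) (fun x hx => by rw [if_pos hx.1]; ring)]
    rw [integral_sub ((hIxρ.mono_set hsub2).const_mul F) ((hIρ.mono_set hsub2).const_mul S0),
      integral_const_mul, integral_const_mul, integral_Ico_eq_integral_Ioo, integral_Ico_eq_integral_Ioo]
  rw [hpart1, hpart2]
  have hker := kernel_identity hα hβ (⟨ht0, ht1⟩ : t ∈ Ioo (0:ℝ) 1)
  rw [← hρ] at hker
  rw [← hF, ← hS0, ← hG, ← hS1] at hker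
  linarith

lemma if_mem_integral {A : Set ℝ} (hA : MeasurableSet A) (hsub : A ⊆ Ioo 0 1) (k : ℝ → ℝ) :
    ∫ y in Ioo (0:ℝ) 1, (if y ∈ A then k y else 0) = ∫ y in A, k y := by
  have e : (fun y => if y ∈ A then k y else 0) = A.indicator k := by
    funext y
    by_cases h : y ∈ A
    · rw [if_pos h, Set.indicator_of_mem h]
    · rw [if_neg h, Set.indicator_of_notMem h]
  rw [e, integral_indicator hA, Measure.restrict_restrict hA, inter_eq_left.2 hsub]

theorem main_aux (hα : 0 < α) (hβ : 0 < β) {f : ℝ → ℝ} (hf : ContDiff ℝ 1 f) :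
    ∫ x in Ioo (0:ℝ) 1, f x ^ 2 * rho α β x
      ≤ (1 / (α + β)) * (∫ x in Ioo (0:ℝ) 1, (x * (1 - x) * deriv f x ^ 2) * rho α β x)
        + (∫ x in Ioo (0:ℝ) 1, f x * rho α β x) ^ 2 := by
  set ρ := rho α β with hρdef
  have hfc : Continuous f := hf.continuous
  have hg : Continuous (deriv f) := hf.continuous_deriv le_rfl
  obtain ⟨Mf, hMf⟩ := isCompact_Icc.exists_bound_of_continuousOn (s := Icc (0:ℝ) 1) hfc.continuousOn
  obtain ⟨Mg, hMg⟩ := isCompact_Icc.exists_bound_of_continuousOn (s := Icc (0:ℝ) 1) hg.continuousOn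
  simp only [Real.norm_eq_abs] at hMf hMg
  have hMf0 : 0 ≤ Mf := le_trans (abs_nonneg _) (hMf 0 (by norm_num))
  have hMg0 : 0 ≤ Mg := le_trans (abs_nonneg _) (hMg 0 (by norm_num))
  have hIρ : IntegrableOn ρ (Ioo 0 1) := integrableOn_rho hα hβ
  have hmass := mass_one hα hβ
  have hIf : IntegrableOn (fun x => f x * ρ x) (Ioo 0 1) :=
    integrable_bdd_rho hα hβ hfc.measurable (M := Mf)
      (fun x hx => hMf x ⟨hx.1.le, hx.2.le⟩)
  have hIf2 : IntegrableOn (fun x => f x ^ 2 * ρ x) (Ioo 0 1) :=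
    integrable_bdd_rho hα hβ (hfc.measurable.pow_const 2) (M := Mf ^ 2)
      (fun x hx => by
        rw [abs_pow]
        exact pow_le_pow_left₀ (abs_nonneg _) (hMf x ⟨hx.1.le, hx.2.le⟩) 2)
  have hIσg : IntegrableOn (fun x => (x * (1 - x) * deriv f x ^ 2) * ρ x) (Ioo 0 1) := by
    refine integrable_bdd_rho hα hβ (by fun_prop) (M := Mg ^ 2) ?_
    intro x hx
    have h1 : |deriv f x| ≤ Mg := hMg x ⟨hx.1.le, hx.2.le⟩
    have h2 : deriv f x ^ 2 ≤ Mg ^ 2 := by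
      rw [← sq_abs]; exact pow_le_pow_left₀ (abs_nonneg _) h1 2
    rw [abs_mul, abs_of_nonneg (sq_nonneg (deriv f x))]
    have h3 : |x * (1 - x)| ≤ 1 := by
      rw [abs_mul, abs_of_nonneg hx.1.le, abs_of_nonneg (by linarith [hx.2] : (0:ℝ) ≤ 1 - x)]
      nlinarith [hx.1, hx.2]
    nlinarith [abs_nonneg (x * (1-x)), sq_nonneg (deriv f x)]
  set L1 := ∫ x in Ioo (0:ℝ) 1, f x * ρ x with hL1
  set L2 := ∫ x in Ioo (0:ℝ) 1, f x ^ 2 * ρ x with hL2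
  set D := ∫ x in Ioo (0:ℝ) 1, (x * (1 - x) * deriv f x ^ 2) * ρ x with hD
  haveI hfin : IsFiniteMeasure (volume.restrict (Ioo (0:ℝ) 1)) := by
    constructor
    rw [Measure.restrict_apply_univ]
    exact measure_Ioo_lt_top
  have hρρInt : Integrable (fun z : ℝ × ℝ => ρ z.1 * ρ z.2)
      ((volume.restrict (Ioo (0:ℝ) 1)).prod (volume.restrict (Ioo (0:ℝ) 1))) :=
    Integrable.mul_prod hIρ hIρ
  have hbox := measurableSet_Ioo (a := (0:ℝ)) (b := (1:ℝ))
  -- P integrable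
  have hPmeas : AEStronglyMeasurable (fun z : ℝ × ℝ => (f z.1 - f z.2) ^ 2 * (ρ z.1 * ρ z.2))
      ((volume.restrict (Ioo (0:ℝ) 1)).prod (volume.restrict (Ioo (0:ℝ) 1))) :=
    ((((hfc.comp continuous_fst).sub (hfc.comp continuous_snd)).pow 2).measurable.mul
      ((measurable_rho.comp measurable_fst).mul (measurable_rho.comp measurable_snd))).aestronglyMeasurable
  have hρρ_nonneg : ∀ z : ℝ × ℝ, z ∈ Ioo (0:ℝ) 1 ×ˢ Ioo (0:ℝ) 1 → 0 ≤ ρ z.1 * ρ z.2 := by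
    rintro z ⟨hz1, hz2⟩
    exact mul_nonneg (rho_nonneg hα hβ hz1.1.le hz1.2.le) (rho_nonneg hα hβ hz2.1.le hz2.2.le)
  have hPint : Integrable (fun z : ℝ × ℝ => (f z.1 - f z.2) ^ 2 * (ρ z.1 * ρ z.2))
      ((volume.restrict (Ioo (0:ℝ) 1)).prod (volume.restrict (Ioo (0:ℝ) 1))) := by
    refine Integrable.mono' (hρρInt.const_mul ((2*Mf)^2)) hPmeas ?_
    rw [Measure.prod_restrict]
    filter_upwards [ae_restrict_mem (hbox.prod hbox)] with z hz
    have h0 := hρρ_nonneg z hz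
    obtain ⟨hz1, hz2⟩ := hz
    have h1 : |f z.1 - f z.2| ≤ 2 * Mf := by
      have := hMf z.1 ⟨hz1.1.le, hz1.2.le⟩
      have := hMf z.2 ⟨hz2.1.le, hz2.2.le⟩
      calc |f z.1 - f z.2| ≤ |f z.1| + |f z.2| := abs_sub _ _
        _ ≤ 2 * Mf := by linarith
    rw [Real.norm_eq_abs, abs_mul, abs_of_nonneg h0, abs_of_nonneg (sq_nonneg _)]
    have : (f z.1 - f z.2) ^ 2 ≤ (2*Mf)^2 := by
      rw [← sq_abs]; exact pow_le_pow_left₀ (abs_nonneg _) h1 2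
    nlinarith
  -- h1 : variance expansion
  have hvar : ∫ z, (f z.1 - f z.2) ^ 2 * (ρ z.1 * ρ z.2)
        ∂((volume.restrict (Ioo (0:ℝ) 1)).prod (volume.restrict (Ioo (0:ℝ) 1)))
      = 2 * L2 - 2 * L1 ^ 2 := by
    rw [integral_prod _ hPint]
    have hinner : ∀ x : ℝ, (∫ y in Ioo (0:ℝ) 1, (f x - f y) ^ 2 * (ρ x * ρ y))
        = ρ x * (f x ^ 2 - 2 * f x * L1 + L2) := by
      intro x
      have e : (fun y => (f x - f y) ^ 2 * (ρ x * ρ y))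
          = fun y => ρ x * (f x ^ 2 * ρ y - (2 * f x) * (f y * ρ y) + f y ^ 2 * ρ y) := by
        funext y; ring
      rw [e, integral_const_mul]
      congr 1
      have hIa : IntegrableOn (fun y => f x ^ 2 * ρ y - (2 * f x) * (f y * ρ y)) (Ioo 0 1) :=
        (hIρ.const_mul (f x ^ 2)).sub (hIf.const_mul (2 * f x))
      rw [integral_add hIa hIf2, integral_sub (hIρ.const_mul (f x ^ 2)) (hIf.const_mul (2 * f x)),
        integral_const_mul, integral_const_mul, hmass]
      rw [← hL1, ← hL2]
      ring
    rw [integral_congr_ae (Filter.Eventually.of_forall hinner)]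
    have e2 : (fun x => ρ x * (f x ^ 2 - 2 * f x * L1 + L2))
        = fun x => (f x ^ 2 * ρ x - (2 * L1) * (f x * ρ x)) + L2 * ρ x := by
      funext x; ring
    have hIb : IntegrableOn (fun x => f x ^ 2 * ρ x - (2 * L1) * (f x * ρ x)) (Ioo 0 1) :=
      hIf2.sub (hIf.const_mul (2 * L1))
    rw [e2, integral_add hIb (hIρ.const_mul L2),
      integral_sub hIf2 (hIf.const_mul (2 * L1)), integral_const_mul, integral_const_mul, hmass]
    rw [← hL1, ← hL2]
    ring
  -- representation of the inner interval integral via a primitive (for measurability)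
  set F0 : ℝ → ℝ := fun u => ∫ s in (0:ℝ)..u, deriv f s ^ 2 with hF0def
  have hF0c : Continuous F0 :=
    intervalIntegral.continuous_primitive (fun a b => (hg.pow 2).intervalIntegrable a b) 0
  have hQrepr : ∀ x y : ℝ, (∫ t in Ι y x, deriv f t ^ 2) = |F0 x - F0 y| := by
    intro x y
    have key : ∀ u v : ℝ, u ≤ v → F0 v - F0 u = ∫ t in Ioc u v, deriv f t ^ 2 := by
      intro u v huv
      have := intervalIntegral.integral_add_adjacent_intervals (μ := volume)
        (a := 0) (b := u) (c := v) ((hg.pow 2).intervalIntegrable 0 u) ((hg.pow 2).intervalIntegrable u v)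
      rw [hF0def]
      simp only
      simp only [Pi.pow_apply] at this
      rw [← this, intervalIntegral.integral_of_le huv]
      ring
    rcases le_total y x with h | h
    · rw [uIoc_of_le h, key y x h]
      exact (abs_of_nonneg (setIntegral_nonneg measurableSet_Ioc fun t _ => sq_nonneg _)).symm
    · rw [uIoc_of_ge h, abs_sub_comm, key x y h]
      exact (abs_of_nonneg (setIntegral_nonneg measurableSet_Ioc fun t _ => sq_nonneg _)).symm
  -- Q : the Cauchy-Schwarz majorant
  set Kg := ∫ t in Ioc (0:ℝ) 1, deriv f t ^ 2 with hKgdef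
  have hQfun : (fun z : ℝ × ℝ => (|z.1 - z.2| * ∫ t in Ι z.2 z.1, deriv f t ^ 2) * (ρ z.1 * ρ z.2))
      = fun z : ℝ × ℝ => (|z.1 - z.2| * |F0 z.1 - F0 z.2|) * (ρ z.1 * ρ z.2) := by
    funext z; rw [hQrepr z.1 z.2]
  have hQmeas : AEStronglyMeasurable
      (fun z : ℝ × ℝ => (|z.1 - z.2| * ∫ t in Ι z.2 z.1, deriv f t ^ 2) * (ρ z.1 * ρ z.2))
      ((volume.restrict (Ioo (0:ℝ) 1)).prod (volume.restrict (Ioo (0:ℝ) 1))) := by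
    rw [hQfun]
    exact ((((continuous_fst.sub continuous_snd).abs.mul
      (((hF0c.comp continuous_fst).sub (hF0c.comp continuous_snd)).abs)).measurable).mul
      ((measurable_rho.comp measurable_fst).mul (measurable_rho.comp measurable_snd))).aestronglyMeasurable
  have hIintbound : ∀ z : ℝ × ℝ, z ∈ Ioo (0:ℝ) 1 ×ˢ Ioo (0:ℝ) 1 →
      (0 ≤ ∫ t in Ι z.2 z.1, deriv f t ^ 2) ∧ (∫ t in Ι z.2 z.1, deriv f t ^ 2) ≤ Kg := by
    rintro z ⟨hz1, hz2⟩
    constructor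
    · exact setIntegral_nonneg measurableSet_uIoc fun t _ => sq_nonneg _
    · refine setIntegral_mono_set ((hg.pow 2).integrableOn_Ioc)
        (Filter.Eventually.of_forall fun t => sq_nonneg _)
        (HasSubset.Subset.eventuallyLE ?_)
      intro t ht
      have h1 : (0:ℝ) < z.2 ⊓ z.1 := lt_min hz2.1 hz1.1
      have h2 : z.2 ⊔ z.1 ≤ 1 := max_le hz2.2.le hz1.2.le
      exact ⟨lt_trans h1 ht.1, le_trans ht.2 h2⟩
  have habs1 : ∀ z : ℝ × ℝ, z ∈ Ioo (0:ℝ) 1 ×ˢ Ioo (0:ℝ) 1 → |z.1 - z.2| ≤ 1 := by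
    rintro z ⟨hz1, hz2⟩
    rw [abs_le]
    constructor <;> [linarith [hz1.1, hz2.2]; linarith [hz1.2, hz2.1] ]
  have hQint : Integrable
      (fun z : ℝ × ℝ => (|z.1 - z.2| * ∫ t in Ι z.2 z.1, deriv f t ^ 2) * (ρ z.1 * ρ z.2))
      ((volume.restrict (Ioo (0:ℝ) 1)).prod (volume.restrict (Ioo (0:ℝ) 1))) := by
    refine Integrable.mono' (hρρInt.const_mul Kg) hQmeas ?_
    rw [Measure.prod_restrict]
    filter_upwards [ae_restrict_mem (hbox.prod hbox)] with z hz
    have h0 := hρρ_nonneg z hz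
    obtain ⟨hpos, hle⟩ := hIintbound z hz
    have h1 := habs1 z hz
    rw [Real.norm_eq_abs, abs_mul, abs_of_nonneg h0, abs_mul, abs_abs,
      abs_of_nonneg hpos]
    have : |z.1 - z.2| * (∫ t in Ι z.2 z.1, deriv f t ^ 2) ≤ 1 * Kg :=
      mul_le_mul h1 hle hpos zero_le_one
    nlinarith [abs_nonneg (z.1 - z.2)]
  -- P ≤ Q pointwise a.e.
  have hPQae : (fun z : ℝ × ℝ => (f z.1 - f z.2) ^ 2 * (ρ z.1 * ρ z.2))
      ≤ᶠ[ae (((volume.restrict (Ioo (0:ℝ) 1)).prod (volume.restrict (Ioo (0:ℝ) 1))))]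
      fun z : ℝ × ℝ => (|z.1 - z.2| * ∫ t in Ι z.2 z.1, deriv f t ^ 2) * (ρ z.1 * ρ z.2) := by
    rw [Measure.prod_restrict]
    filter_upwards [ae_restrict_mem (hbox.prod hbox)] with z hz
    exact mul_le_mul_of_nonneg_right (cs_bound hf z.1 z.2) (hρρ_nonneg z hz)
  have hPQ := integral_mono_ae hPint hQint hPQae
  -- Fubini swap
  set R : (ℝ × ℝ) → ℝ → ℝ := fun z t =>
    if t ∈ Ι z.2 z.1 then |z.1 - z.2| * deriv f t ^ 2 * (ρ z.1 * ρ z.2) else 0 with hRdef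
  have hE3 : MeasurableSet {p : (ℝ × ℝ) × ℝ | p.2 ∈ Ι p.1.2 p.1.1} := by
    have : {p : (ℝ × ℝ) × ℝ | p.2 ∈ Ι p.1.2 p.1.1}
        = {p : (ℝ × ℝ) × ℝ | p.1.2 ⊓ p.1.1 < p.2} ∩ {p : (ℝ × ℝ) × ℝ | p.2 ≤ p.1.2 ⊔ p.1.1} := by
      ext p; simp [Set.uIoc, mem_Ioc]
    rw [this]
    exact (measurableSet_lt ((measurable_fst.snd).min (measurable_fst.fst)) measurable_snd).inter
      (measurableSet_le measurable_snd ((measurable_fst.snd).max (measurable_fst.fst)))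
  have hRmeas : Measurable (fun p : (ℝ × ℝ) × ℝ => R p.1 p.2) := by
    rw [hRdef]
    exact Measurable.ite hE3
      ((((measurable_fst.fst.sub measurable_fst.snd).abs).mul
        (((hg.measurable).comp measurable_snd).pow_const 2)).mul
        ((measurable_rho.comp measurable_fst.fst).mul (measurable_rho.comp measurable_fst.snd)))
      measurable_const
  have hRint : Integrable (Function.uncurry R)
      (((volume.restrict (Ioo (0:ℝ) 1)).prod (volume.restrict (Ioo (0:ℝ) 1))).prod
        (volume.restrict (Ioo (0:ℝ) 1))) := by
    have huncurry : Function.uncurry R = fun p : (ℝ × ℝ) × ℝ => R p.1 p.2 := by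
      funext p; rfl
    rw [huncurry]
    have hdom : Integrable (fun p : (ℝ × ℝ) × ℝ => (Mg ^ 2 * (ρ p.1.1 * ρ p.1.2)) * 1)
        (((volume.restrict (Ioo (0:ℝ) 1)).prod (volume.restrict (Ioo (0:ℝ) 1))).prod
          (volume.restrict (Ioo (0:ℝ) 1))) :=
      Integrable.mul_prod (hρρInt.const_mul (Mg ^ 2)) (integrable_const (1:ℝ))
    simp only [mul_one] at hdom
    refine Integrable.mono' hdom hRmeas.aestronglyMeasurable ?_
    rw [Measure.prod_restrict, Measure.prod_restrict]
    filter_upwards [ae_restrict_mem ((hbox.prod hbox).prod hbox)] with p hp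
    obtain ⟨hp1, hp3⟩ := hp
    have h0 := hρρ_nonneg p.1 hp1
    have hgt : deriv f p.2 ^ 2 ≤ Mg ^ 2 := by
      rw [← sq_abs]
      exact pow_le_pow_left₀ (abs_nonneg _) (hMg p.2 ⟨hp3.1.le, hp3.2.le⟩) 2
    rw [hRdef]
    by_cases hmem : p.2 ∈ Ι p.1.2 p.1.1
    · simp only [hmem, if_true]
      rw [Real.norm_eq_abs, abs_mul, abs_mul, abs_abs,
        abs_of_nonneg (sq_nonneg (deriv f p.2)), abs_of_nonneg h0]
      have h1 := habs1 p.1 hp1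
      have hstep : |p.1.1 - p.1.2| * deriv f p.2 ^ 2 ≤ Mg ^ 2 := by
        have h2 := mul_le_mul h1 hgt (sq_nonneg _) zero_le_one
        linarith [h2]
      exact mul_le_mul_of_nonneg_right hstep h0
    · simp only [hmem, if_false]
      rw [norm_zero]
      positivity
  have hswap := integral_integral_swap hRint
  -- LHS of the swap equals ∫ Q
  have hQR : ∫ z, (|z.1 - z.2| * ∫ t in Ι z.2 z.1, deriv f t ^ 2) * (ρ z.1 * ρ z.2)
        ∂((volume.restrict (Ioo (0:ℝ) 1)).prod (volume.restrict (Ioo (0:ℝ) 1)))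
      = ∫ z, (∫ t in Ioo (0:ℝ) 1, R z t)
        ∂((volume.restrict (Ioo (0:ℝ) 1)).prod (volume.restrict (Ioo (0:ℝ) 1))) := by
    refine integral_congr_ae ?_
    rw [Measure.prod_restrict]
    filter_upwards [ae_restrict_mem (hbox.prod hbox)] with z hz
    obtain ⟨hz1, hz2⟩ := hz
    have hsubI : Ι z.2 z.1 ⊆ Ioo (0:ℝ) 1 := by
      intro t ht
      have h1 : (0:ℝ) < z.2 ⊓ z.1 := lt_min hz2.1 hz1.1
      have h2 : z.2 ⊔ z.1 < 1 := max_lt hz2.2 hz1.2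
      exact ⟨lt_trans h1 ht.1, lt_of_le_of_lt ht.2 h2⟩
    rw [hRdef]
    rw [if_mem_integral measurableSet_uIoc hsubI
      (fun t => |z.1 - z.2| * deriv f t ^ 2 * (ρ z.1 * ρ z.2))]
    have e : (fun t => |z.1 - z.2| * deriv f t ^ 2 * (ρ z.1 * ρ z.2))
        = fun t => (|z.1 - z.2| * (ρ z.1 * ρ z.2)) * deriv f t ^ 2 := by
      funext t; ring
    rw [e, integral_const_mul]
    ring
  -- inner integral after the swap
  have hinner2 : ∀ t : ℝ, (∫ z, R z t
        ∂((volume.restrict (Ioo (0:ℝ) 1)).prod (volume.restrict (Ioo (0:ℝ) 1))))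
      = deriv f t ^ 2 * ∫ z, (if t ∈ Ι z.2 z.1 then |z.1 - z.2| * (ρ z.1 * ρ z.2) else 0)
        ∂((volume.restrict (Ioo (0:ℝ) 1)).prod (volume.restrict (Ioo (0:ℝ) 1))) := by
    intro t
    rw [← integral_const_mul]
    refine integral_congr_ae (Filter.Eventually.of_forall fun z => ?_)
    rw [hRdef]
    by_cases hmem : t ∈ Ι z.2 z.1
    · simp only [hmem, if_true]; ring
    · simp only [hmem, if_false, mul_zero]
  have hfinal : ∫ t in Ioo (0:ℝ) 1, (∫ z, R z t
        ∂((volume.restrict (Ioo (0:ℝ) 1)).prod (volume.restrict (Ioo (0:ℝ) 1))))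
      = ∫ t in Ioo (0:ℝ) 1, deriv f t ^ 2 * (2 * phi α β t) := by
    refine setIntegral_congr_fun measurableSet_Ioo fun t ht => ?_
    rw [hinner2 t, W_eval hα hβ ht]
  have hphi2 : ∫ t in Ioo (0:ℝ) 1, deriv f t ^ 2 * (2 * phi α β t)
      = (2 / (α + β)) * D := by
    rw [hD, ← integral_const_mul]
    refine setIntegral_congr_fun measurableSet_Ioo fun t ht => ?_
    rw [phi_eq hα hβ ht]
    have hab : α + β ≠ 0 := by positivity
    field_simp
    ring
  -- conclusion
  have hchain : 2 * L2 - 2 * L1 ^ 2 ≤ (2 / (α + β)) * D := by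
    calc 2 * L2 - 2 * L1 ^ 2
        = ∫ z, (f z.1 - f z.2) ^ 2 * (ρ z.1 * ρ z.2)
          ∂((volume.restrict (Ioo (0:ℝ) 1)).prod (volume.restrict (Ioo (0:ℝ) 1))) := hvar.symm
      _ ≤ ∫ z, (|z.1 - z.2| * ∫ t in Ι z.2 z.1, deriv f t ^ 2) * (ρ z.1 * ρ z.2)
          ∂((volume.restrict (Ioo (0:ℝ) 1)).prod (volume.restrict (Ioo (0:ℝ) 1))) := hPQ
      _ = (2 / (α + β)) * D := by rw [hQR, hswap, hfinal, hphi2]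
  have hab : (0:ℝ) < α + β := by linarith
  have he : (2 / (α + β)) * D = 2 * ((1 / (α + β)) * D) := by ring
  linarith

lemma integral_beta (hα : 0 < α) (hβ : 0 < β) (h : ℝ → ℝ) :
    ∫ x, h x ∂(betaMeasure α β) = ∫ x in Ioo (0:ℝ) 1, h x * rho α β x := by
  have hd : (fun x : ℝ => ENNReal.ofReal (Real.Gamma (α + β) / (Real.Gamma α * Real.Gamma β)
        * x ^ (α - 1) * (1 - x) ^ (β - 1)))
      = fun x : ℝ => ((Real.toNNReal (rho α β x) : ℝ≥0) : ℝ≥0∞) := by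
    funext x; rfl
  rw [betaMeasure, hd, integral_withDensity_eq_integral_smul (measurable_rho.real_toNNReal) h]
  rw [← Measure.restrict_congr_set (Ioo_ae_eq_Icc (μ := volume) (a := (0:ℝ)) (b := (1:ℝ)))]
  refine setIntegral_congr_fun measurableSet_Ioo fun x hx => ?_
  rw [NNReal.smul_def, Real.coe_toNNReal _ (rho_nonneg hα hβ hx.1.le hx.2.le), smul_eq_mul]
  ring

end WFAux

open WFAux in
/-- **Poincaré inequality for the Wright–Fisher diffusion.**
For `a, b > 0` the Beta(2a,2b) measure `π_{a,b}` satisfies, for every `C¹` function `f`,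
`∫ f² dπ ≤ (1/(a+b)) ∫ x(1-x) f'(x)² dπ + (∫ f dπ)²`; i.e. the operator
`x(1-x) d²/dx² + (a-(a+b)x) d/dx` has spectral gap at least `a+b` in `L²(π_{a,b})`. -/
theorem wrightFisher_poincare (a b : ℝ) (ha : 0 < a) (hb : 0 < b)
    (f : ℝ → ℝ) (hf : ContDiff ℝ 1 f) :
    ∫ x, f x ^ 2 ∂(betaMeasure (2 * a) (2 * b))
      ≤ (1 / (a + b)) * ∫ x, x * (1 - x) * deriv f x ^ 2 ∂(betaMeasure (2 * a) (2 * b))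
        + (∫ x, f x ∂(betaMeasure (2 * a) (2 * b))) ^ 2 := by
  have hα : 0 < 2 * a := by linarith
  have hβ : 0 < 2 * b := by linarith
  rw [integral_beta hα hβ (fun x => f x ^ 2), integral_beta hα hβ (fun x => x * (1 - x) * deriv f x ^ 2),
    integral_beta hα hβ f]
  have key := main_aux hα hβ hf
  have hD0 : 0 ≤ ∫ x in Ioo (0:ℝ) 1, (x * (1 - x) * deriv f x ^ 2) * rho (2*a) (2*b) x := by
    refine setIntegral_nonneg measurableSet_Ioo fun x hx => ?_
    have h1 := rho_nonneg hα hβ hx.1.le hx.2.le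
    have h2 : (0:ℝ) ≤ x * (1 - x) := mul_nonneg hx.1.le (by linarith [hx.2])
    positivity
  have hmono : 1 / (2*a + 2*b) * (∫ x in Ioo (0:ℝ) 1, (x * (1 - x) * deriv f x ^ 2) * rho (2*a) (2*b) x)
      ≤ 1 / (a + b) * (∫ x in Ioo (0:ℝ) 1, (x * (1 - x) * deriv f x ^ 2) * rho (2*a) (2*b) x) := by
    refine mul_le_mul_of_nonneg_right ?_ hD0
    rw [div_le_div_iff₀ (by linarith) (by linarith)]
    linarith
  linarith [key, hmono]
end

section
/- Let 0 ≤ α < 1 and θ > −α, and let V_1, V_2, … be independent random variables where V_k has the Beta(1-α, θ+kα) distribution on [0,1]. Define X_1 = V_1 and X_n = V_n ∏_{k=1}^{n-1}(1-V_k) for n ≥ 2. Then almost surely ∑_{n=1}^∞ X_n = 1; equivalently, ∏_{k=1}^n (1-V_k) → 0 almost surely. Hence the two-parameter GEM distribution (the law of (X_1, X_2, …)) is concentrated on 𝔻_∞ = {x ∈ [0,1]^ℕ : ∑_{i≥1} x_i = 1}. -/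
open MeasureTheory ProbabilityTheory Filter Set
open scoped NNReal ENNReal

/-- The Beta(a,b) distribution on [0,1]. -/
noncomputable def betaMeasure' (a b : ℝ) : Measure ℝ :=
  (volume.restrict (Icc (0:ℝ) 1)).withDensity fun x =>
    ENNReal.ofReal (Real.Gamma (a + b) / (Real.Gamma a * Real.Gamma b)
      * x ^ (a - 1) * (1 - x) ^ (b - 1))



lemma J_complex (a b : ℝ) :
    Complex.betaIntegral a b = (((∫ x in (0:ℝ)..1, x ^ (a-1) * (1-x) ^ (b-1)) : ℝ) : ℂ) := by
  rw [Complex.betaIntegral, ← intervalIntegral.integral_ofReal]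
  apply intervalIntegral.integral_congr
  intro x hx
  rw [Set.uIcc_of_le (by norm_num : (0:ℝ) ≤ 1)] at hx
  obtain ⟨hx0, hx1⟩ := hx
  push_cast
  rw [Complex.ofReal_cpow hx0, Complex.ofReal_cpow (by linarith : (0:ℝ) ≤ 1 - x)]
  push_cast
  ring

lemma J_gamma {a b : ℝ} (ha : 0 < a) (hb : 0 < b) :
    (∫ x in (0:ℝ)..1, x ^ (a-1) * (1-x) ^ (b-1))
      = Real.Gamma a * Real.Gamma b / Real.Gamma (a+b) := by
  have h := Complex.Gamma_mul_Gamma_eq_betaIntegral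
    (s := (a:ℂ)) (t := (b:ℂ)) (by simpa using ha) (by simpa using hb)
  rw [J_complex, show ((a:ℂ)+b) = ((a+b:ℝ):ℂ) by push_cast; ring,
    Complex.Gamma_ofReal, Complex.Gamma_ofReal, Complex.Gamma_ofReal] at h
  have h3 : Real.Gamma a * Real.Gamma b
      = Real.Gamma (a+b) * ∫ x in (0:ℝ)..1, x ^ (a-1) * (1-x) ^ (b-1) := by
    exact_mod_cast h
  have hG : Real.Gamma (a+b) ≠ 0 := (Real.Gamma_pos_of_pos (by linarith)).ne'
  field_simp
  linarith [h3]

lemma Jicc_gamma {a b : ℝ} (ha : 0 < a) (hb : 0 < b) :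
    (∫ x in Icc (0:ℝ) 1, x ^ (a-1) * (1-x) ^ (b-1))
      = Real.Gamma a * Real.Gamma b / Real.Gamma (a+b) := by
  rw [integral_Icc_eq_integral_Ioc, ← intervalIntegral.integral_of_le zero_le_one,
    J_gamma ha hb]
lemma betaMeasure_compl (a b : ℝ) : betaMeasure' a b ((Icc (0:ℝ) 1)ᶜ) = 0 := by
  rw [betaMeasure', withDensity_apply _ measurableSet_Icc.compl]
  apply setLIntegral_measure_zero
  rw [Measure.restrict_apply measurableSet_Icc.compl, compl_inter_self, measure_empty]

lemma betaMeasure_integral_one_sub {a b : ℝ} (ha : 0 < a) (hb : 0 < b) :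
    ∫ x, (1 - x) ∂betaMeasure' a b = b / (a + b) := by
  set C : ℝ := Real.Gamma (a + b) / (Real.Gamma a * Real.Gamma b) with hCdef
  have hGa := Real.Gamma_pos_of_pos ha
  have hGb := Real.Gamma_pos_of_pos hb
  have hGab := Real.Gamma_pos_of_pos (by linarith : (0:ℝ) < a + b)
  have hC : 0 < C := by positivity
  have hdens : Measurable fun x : ℝ => (C * x ^ (a-1) * (1-x) ^ (b-1)).toNNReal := by
    apply Measurable.real_toNNReal
    exact ((measurable_const.mul (measurable_id.pow_const _)).mul
      ((measurable_const.sub measurable_id).pow_const _))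
  have key : ∫ x, (1 - x) ∂betaMeasure' a b
      = ∫ x in Icc (0:ℝ) 1, ((C * x ^ (a-1) * (1-x) ^ (b-1)).toNNReal : ℝ≥0) • (1 - x) := by
    rw [betaMeasure']
    have := integral_withDensity_eq_integral_smul hdens (μ := volume.restrict (Icc (0:ℝ) 1))
      (fun x : ℝ => 1 - x)
    simpa [ENNReal.ofReal] using this
  rw [key]
  have congr1 : ∫ x in Icc (0:ℝ) 1, ((C * x ^ (a-1) * (1-x) ^ (b-1)).toNNReal : ℝ≥0) • (1 - x)
      = ∫ x in Icc (0:ℝ) 1, C * (x ^ (a-1) * (1-x) ^ ((b+1)-1)) := by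
    apply setIntegral_congr_fun measurableSet_Icc
    intro x hx
    obtain ⟨hx0, hx1⟩ := hx
    dsimp only
    have h1 : (0:ℝ) ≤ x ^ (a-1) := Real.rpow_nonneg hx0 _
    have h2 : (0:ℝ) ≤ (1-x) ^ (b-1) := Real.rpow_nonneg (by linarith) _
    have hnn : 0 ≤ C * x ^ (a-1) * (1-x) ^ (b-1) := by positivity
    rw [NNReal.smul_def, smul_eq_mul, Real.coe_toNNReal _ hnn]
    rcases eq_or_lt_of_le (hx1 : x ≤ 1) with h | h
    · subst h
      rw [sub_self, Real.zero_rpow (by linarith : b + 1 - 1 ≠ 0)]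
      ring
    · have h1x : (1:ℝ) - x ≠ 0 := by linarith
      rw [show b + 1 - 1 = (b - 1) + 1 by ring, Real.rpow_add_one h1x]
      ring
  rw [congr1, integral_const_mul, Jicc_gamma ha (by linarith : (0:ℝ) < b + 1)]
  rw [Real.Gamma_add_one hb.ne', show a + (b+1) = (a+b) + 1 by ring,
    Real.Gamma_add_one (by linarith : a + b ≠ 0)]
  have h1 : Real.Gamma a ≠ 0 := hGa.ne'
  have h2 : Real.Gamma b ≠ 0 := hGb.ne'
  have h3 : Real.Gamma (a+b) ≠ 0 := hGab.ne'
  have h4 : a + b ≠ 0 := by linarith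
  rw [hCdef]
  field_simp

/-- **The two-parameter GEM(α,θ) distribution is concentrated on `𝔻_∞`.**
Let `0 ≤ α < 1`, `θ > −α`, and let `V_0, V_1, …` be independent with
`V_i ~ Beta(1-α, θ+(i+1)α)` (so `V_i` is the paper's `V_{i+1}`).  With
`X_n = V_n ∏_{k<n}(1-V_k)`, almost surely `∏_{k<n}(1-V_k) → 0` and `∑_n X_n = 1`;
hence the law of `(X_n)` is carried by `𝔻_∞ = {x ∈ [0,1]^ℕ : ∑ x_i = 1}`. -/
theorem gem_two_param_concentrated_on_simplex
    {Ω : Type*} [MeasurableSpace Ω] (P : Measure Ω) [IsProbabilityMeasure P]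
    (α θ : ℝ) (hα₀ : 0 ≤ α) (hα₁ : α < 1) (hθ : -α < θ)
    (V : ℕ → Ω → ℝ)
    (hmeas : ∀ i, Measurable (V i))
    (hindep : iIndepFun V P)
    (hlaw : ∀ i : ℕ, P.map (V i) = betaMeasure' (1 - α) (θ + (i + 1) * α)) :
    ∀ᵐ ω ∂P,
      Tendsto (fun n => ∏ k ∈ Finset.range n, (1 - V k ω)) atTop (nhds 0)
      ∧ ∑' n, (V n ω * ∏ k ∈ Finset.range n, (1 - V k ω)) = 1 := by
  have ha : (0:ℝ) < 1 - α := by linarith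
  set a : ℝ := 1 - α with hadef
  set b : ℕ → ℝ := fun k => θ + (k + 1) * α with hbdef
  have hb : ∀ k, 0 < b k := by
    intro k
    have : (0:ℝ) ≤ k * α := by positivity
    simp only [hbdef]
    nlinarith
  have hab : ∀ k, 0 < a + b k := fun k => by linarith [hb k]
  -- almost surely all V k lie in [0,1]
  have hmem : ∀ᵐ ω ∂P, ∀ k, V k ω ∈ Icc (0:ℝ) 1 := by
    rw [ae_all_iff]
    intro k
    have h0 : P ((V k) ⁻¹' (Icc (0:ℝ) 1)ᶜ) = 0 := by
      rw [← Measure.map_apply (hmeas k) (measurableSet_Icc (a := (0:ℝ)) (b := 1)).compl,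
        hlaw k, betaMeasure_compl _ _]
    rw [ae_iff]
    convert h0 using 2
    rfl
  -- expectation of each factor
  have EW : ∀ k, ∫ ω, (1 - V k ω) ∂P = b k / (a + b k) := by
    intro k
    have hsm : AEStronglyMeasurable (fun x : ℝ => 1 - x) (P.map (V k)) :=
      (continuous_const.sub continuous_id).aestronglyMeasurable
    have h1 := integral_map (hmeas k).aemeasurable hsm
    rw [hlaw k, betaMeasure_integral_one_sub ha (hb k)] at h1
    exact h1.symm
  -- expectation of partial products
  set W : ℕ → Ω → ℝ := fun k ω => 1 - V k ω with hWdef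
  have hWmeas : ∀ k, Measurable (W k) := fun k => measurable_const.sub (hmeas k)
  have hWindep : iIndepFun W P :=
    hindep.comp (fun _ => fun x => 1 - x) (fun _ => measurable_const.sub measurable_id)
  have Eprod : ∀ n, ∫ ω, ∏ k ∈ Finset.range n, (1 - V k ω) ∂P
      = ∏ k ∈ Finset.range n, (b k / (a + b k)) := by
    intro n
    induction n with
    | zero => simp
    | succ n ih =>
      have hfun : ∀ m : ℕ, (fun ω => ∏ k ∈ Finset.range m, (1 - V k ω))
          = (∏ j ∈ Finset.range m, W j) := by
        intro m; funext ω; rw [Finset.prod_apply]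
      have hpm : Measurable (∏ j ∈ Finset.range n, W j) := by
        rw [← hfun n]
        exact Finset.measurable_prod (Finset.range n) (fun i _ => hWmeas i)
      have hI := (hWindep.indepFun_prod_range_succ hWmeas n).integral_mul_eq_mul_integral
        hpm.aestronglyMeasurable ((hWmeas n).aestronglyMeasurable)
      have hEWn : integral P (W n) = b n / (a + b n) := EW n
      have hin : integral P (∏ j ∈ Finset.range n, W j)
          = ∏ k ∈ Finset.range n, (b k / (a + b k)) := by
        rw [← hfun n]; exact ih
      calc ∫ ω, ∏ k ∈ Finset.range (n+1), (1 - V k ω) ∂P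
          = integral P ((∏ j ∈ Finset.range n, W j) * W n) := by
            rw [show (fun ω => ∏ k ∈ Finset.range (n+1), (1 - V k ω))
              = (∏ j ∈ Finset.range n, W j) * W n from
                (hfun (n+1)).trans (Finset.prod_range_succ W n)]
        _ = integral P (∏ j ∈ Finset.range n, W j) * integral P (W n) := hI
        _ = ∏ k ∈ Finset.range (n+1), (b k / (a + b k)) := by
            rw [hin, hEWn, Finset.prod_range_succ]
  -- the product of expectations tends to zero
  set D : ℝ := a / (θ + 1 + α) with hDdef
  have hθ1 : (0:ℝ) < θ + 1 + α := by nlinarith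
  have hD : 0 < D := by positivity
  have hE0 : Tendsto (fun n => ∏ k ∈ Finset.range n, (b k / (a + b k))) atTop (nhds 0) := by
    have hub : ∀ k : ℕ, b k / (a + b k) ≤ Real.exp (-(D * (1 / (k + 1)))) := by
      intro k
      have hk : (0:ℝ) ≤ (k:ℝ) := Nat.cast_nonneg k
      have hle : a + b k ≤ (θ + 1 + α) * ((k:ℝ) + 1) := by
        have h1 : a = 1 - α := hadef
        have h2 : b k = θ + ((k:ℝ) + 1) * α := by rw [hbdef]
        nlinarith
      have h1 : D * (1 / (k + 1)) ≤ a / (a + b k) := by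
        rw [hDdef, div_mul_div_comm, mul_one]
        exact div_le_div_of_nonneg_left ha.le (hab k) hle
      have h2 : b k / (a + b k) = 1 - a / (a + b k) := by
        rw [eq_sub_iff_add_eq, ← add_div, add_comm (b k) a, div_self (hab k).ne']
      have h3 : 1 - a / (a + b k) ≤ Real.exp (-(a / (a + b k))) := by
        have := Real.add_one_le_exp (-(a / (a + b k)))
        linarith
      have h4 : Real.exp (-(a / (a + b k))) ≤ Real.exp (-(D * (1 / (k + 1)))) :=
        Real.exp_le_exp.mpr (by linarith)
      linarith [h2 ▸ (h3.trans h4)]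
    have hnn : ∀ k : ℕ, 0 ≤ b k / (a + b k) := fun k => div_nonneg (hb k).le (hab k).le
    apply squeeze_zero (fun n => Finset.prod_nonneg (fun k _ => hnn k))
      (g := fun n => Real.exp (-(D * ∑ k ∈ Finset.range n, (1 / ((k:ℝ) + 1)))))
    · intro n
      calc ∏ k ∈ Finset.range n, (b k / (a + b k))
          ≤ ∏ k ∈ Finset.range n, Real.exp (-(D * (1 / ((k:ℝ) + 1)))) :=
            Finset.prod_le_prod (fun k _ => hnn k) (fun k _ => hub k)
        _ = Real.exp (∑ k ∈ Finset.range n, -(D * (1 / ((k:ℝ) + 1)))) :=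
            (Real.exp_sum _ _).symm
        _ = Real.exp (-(D * ∑ k ∈ Finset.range n, (1 / ((k:ℝ) + 1)))) := by
            congr 1
            simp [Finset.mul_sum]
    · apply Real.tendsto_exp_atBot.comp
      apply (tendsto_neg_atTop_atBot).comp
      exact (Real.tendsto_sum_range_one_div_nat_succ_atTop).const_mul_atTop hD
  -- dominated convergence: the a.s. limit of the products has zero integral
  set F : ℕ → Ω → ℝ := fun n ω => ∏ k ∈ Finset.range n, (1 - V k ω) with hFdef
  have hFmeas : ∀ n, Measurable (F n) :=
    fun n => Finset.measurable_prod (Finset.range n) (fun i _ => measurable_const.sub (hmeas i))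
  set Lfun : Ω → ℝ := fun ω => ⨅ n, F n ω with hLdef
  have hgood : ∀ ω, (∀ k, V k ω ∈ Icc (0:ℝ) 1) →
      (∀ n, 0 ≤ F n ω) ∧ (∀ n, F n ω ≤ 1) ∧
      Tendsto (fun n => F n ω) atTop (nhds (Lfun ω)) ∧ 0 ≤ Lfun ω ∧ Lfun ω ≤ 1 := by
    intro ω hω
    have hfac : ∀ k, (0:ℝ) ≤ 1 - V k ω ∧ 1 - V k ω ≤ 1 := by
      intro k; constructor <;> [linarith [(hω k).2]; linarith [(hω k).1]]
    have hFnn : ∀ n, 0 ≤ F n ω :=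
      fun n => Finset.prod_nonneg (fun k _ => (hfac k).1)
    have hF1 : ∀ n, F n ω ≤ 1 :=
      fun n => Finset.prod_le_one (fun k _ => (hfac k).1) (fun k _ => (hfac k).2)
    have hanti : Antitone (fun n => F n ω) := by
      apply antitone_nat_of_succ_le
      intro n
      have : F (n+1) ω = F n ω * (1 - V n ω) := Finset.prod_range_succ _ _
      rw [this]
      exact mul_le_of_le_one_right (hFnn n) (hfac n).2
    have hbdd : BddBelow (range fun n => F n ω) := by
      refine ⟨0, ?_⟩
      rintro x ⟨n, rfl⟩
      exact hFnn n
    refine ⟨hFnn, hF1, tendsto_atTop_ciInf hanti hbdd, le_ciInf hFnn, ?_⟩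
    have hF0 : F 0 ω = 1 := by simp [hFdef]
    calc Lfun ω ≤ F 0 ω := ciInf_le hbdd 0
      _ = 1 := hF0
  have h_lim : ∀ᵐ ω ∂P, Tendsto (fun n => F n ω) atTop (nhds (Lfun ω)) := by
    filter_upwards [hmem] with ω hω
    exact (hgood ω hω).2.2.1
  have h_bound : ∀ n, ∀ᵐ ω ∂P, ‖F n ω‖ ≤ (1:ℝ) := by
    intro n
    filter_upwards [hmem] with ω hω
    rw [Real.norm_eq_abs, abs_le]
    exact ⟨by linarith [(hgood ω hω).1 n], (hgood ω hω).2.1 n⟩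
  have hDCT := tendsto_integral_of_dominated_convergence (μ := P)
    (F := F) (f := Lfun) (bound := fun _ => (1:ℝ))
    (fun n => (hFmeas n).aestronglyMeasurable) (integrable_const 1) h_bound h_lim
  have hint0 : ∫ ω, Lfun ω ∂P = 0 := by
    apply tendsto_nhds_unique hDCT
    have : (fun n => ∫ ω, F n ω ∂P) = fun n => ∏ k ∈ Finset.range n, (b k / (a + b k)) := by
      funext n; exact Eprod n
    rw [this]
    exact hE0
  have hLint : Integrable Lfun P := by
    apply (integrable_const (1:ℝ)).mono'
      (aestronglyMeasurable_of_tendsto_ae atTop (fun n => (hFmeas n).aestronglyMeasurable) h_lim)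
    filter_upwards [hmem] with ω hω
    rw [Real.norm_eq_abs, abs_le]
    exact ⟨by linarith [(hgood ω hω).2.2.2.1], (hgood ω hω).2.2.2.2⟩
  have hLnn : 0 ≤ᵐ[P] Lfun := by
    filter_upwards [hmem] with ω hω
    exact (hgood ω hω).2.2.2.1
  have hL0 : Lfun =ᵐ[P] 0 := (integral_eq_zero_iff_of_nonneg_ae hLnn hLint).mp hint0
  -- conclusion
  filter_upwards [hmem, h_lim, hL0] with ω hω htend hzero
  have htend0 : Tendsto (fun n => F n ω) atTop (nhds 0) := by
    rw [Pi.zero_apply] at hzero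
    rwa [hzero] at htend
  refine ⟨htend0, ?_⟩
  have hnn' : ∀ n, 0 ≤ V n ω * F n ω :=
    fun n => mul_nonneg (hω n).1 ((hgood ω hω).1 n)
  have psum : ∀ N, ∑ n ∈ Finset.range N, V n ω * F n ω = 1 - F N ω := by
    intro N
    induction N with
    | zero => simp [hFdef]
    | succ N ih =>
      rw [Finset.sum_range_succ, ih,
        show F (N+1) ω = F N ω * (1 - V N ω) from Finset.prod_range_succ _ _]
      ring
  have hhs : HasSum (fun n => V n ω * F n ω) 1 := by
    rw [hasSum_iff_tendsto_nat_of_nonneg hnn' 1]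
    have : (fun N => ∑ n ∈ Finset.range N, V n ω * F n ω) = fun N => 1 - F N ω := by
      funext N; exact psum N
    rw [this]
    simpa using tendsto_const_nhds.sub htend0
  exact hhs.tsum_eq
end

section
/- For x ∈ [0,1]^ℕ with ∑_{i≥1} x_i ≤ 1, x_k > 0 and ∑_{l=1}^k x_l < 1 for all k, define for i,j ≥ 1: a_{ij}(x) = x_i x_j ∑_{k=1}^{min(i,j)} (δ_{ki}(1−∑_{l=1}^{k-1} x_l) − x_k)(δ_{kj}(1−∑_{l=1}^{k-1} x_l) − x_k) / (x_k (1−∑_{l=1}^k x_l)). Then ∑_{i,j=1}^∞ |a_{ij}(x)| ≤ 3. -/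
open Finset

/-- The diffusion coefficients of the GEM process (indices starting at 0, so index `i`
stands for the paper's `i+1`; the paper's `∑_{l=1}^{k-1}` is `∑ l ∈ range k`, etc.):
`a_{ij}(x) = x_i x_j ∑_{k=1}^{min(i,j)}
  (δ_{ki}(1−∑_{l<k}x_l) − x_k)(δ_{kj}(1−∑_{l<k}x_l) − x_k) / (x_k(1−∑_{l≤k}x_l))`. -/
noncomputable def gemA (x : ℕ → ℝ) (i j : ℕ) : ℝ :=
  x i * x j * ∑ k ∈ Finset.range (min i j + 1),
    (((if k = i then (1:ℝ) else 0) * (1 - ∑ l ∈ Finset.range k, x l) - x k) *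
      ((if k = j then (1:ℝ) else 0) * (1 - ∑ l ∈ Finset.range k, x l) - x k)) /
    (x k * (1 - ∑ l ∈ Finset.range (k + 1), x l))

noncomputable def gemR (x : ℕ → ℝ) (k : ℕ) : ℝ := 1 - ∑ l ∈ Finset.range (k+1), x l

noncomputable def gemC (x : ℕ → ℝ) (i : ℕ) : ℝ := ∑ k ∈ Finset.range i, x k / gemR x k

lemma gemA_core (x : ℕ → ℝ) (hpos : ∀ k, 0 < x k) (i j : ℕ) :
    ∑ k ∈ Finset.range (min i j),
      (((if k = i then (1:ℝ) else 0) * (1 - ∑ l ∈ Finset.range k, x l) - x k) *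
        ((if k = j then (1:ℝ) else 0) * (1 - ∑ l ∈ Finset.range k, x l) - x k)) /
      (x k * (1 - ∑ l ∈ Finset.range (k + 1), x l))
    = gemC x (min i j) := by
  refine Finset.sum_congr rfl fun k hk => ?_
  have hk' := Finset.mem_range.mp hk
  have hki : k ≠ i := Nat.ne_of_lt (lt_of_lt_of_le hk' (min_le_left _ _))
  have hkj : k ≠ j := Nat.ne_of_lt (lt_of_lt_of_le hk' (min_le_right _ _))
  rw [if_neg hki, if_neg hkj]
  have : ((0:ℝ) * (1 - ∑ l ∈ Finset.range k, x l) - x k) *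
      ((0:ℝ) * (1 - ∑ l ∈ Finset.range k, x l) - x k) = x k * x k := by ring
  rw [this, gemR]
  exact mul_div_mul_left _ _ (hpos k).ne'

lemma gemR_eq (x : ℕ → ℝ) (i : ℕ) :
    (1:ℝ) * (1 - ∑ l ∈ Finset.range i, x l) - x i = gemR x i := by
  rw [gemR, Finset.sum_range_succ]; ring

lemma gemA_diag (x : ℕ → ℝ) (hpos : ∀ k, 0 < x k)
    (hpartial : ∀ n, ∑ l ∈ Finset.range (n + 1), x l < 1) (i : ℕ) :
    gemA x i i = x i ^ 2 * gemC x i + x i * gemR x i := by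
  have hRpos : 0 < gemR x i := by have := hpartial i; rw [gemR]; linarith
  rw [gemA, min_self, Finset.sum_range_succ]
  have h1 := gemA_core x hpos i i
  rw [min_self] at h1
  rw [h1, if_pos rfl, gemR_eq]
  have hden : x i * (1 - ∑ l ∈ Finset.range (i+1), x l) = x i * gemR x i := by rw [gemR]
  rw [hden]
  have hx := (hpos i).ne'
  field_simp

lemma gemA_symm (x : ℕ → ℝ) (i j : ℕ) : gemA x i j = gemA x j i := by
  rw [gemA, gemA, min_comm, mul_comm (x i) (x j)]
  congr 1
  exact Finset.sum_congr rfl fun k _ => by ring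

lemma gemA_off (x : ℕ → ℝ) (hpos : ∀ k, 0 < x k)
    (hpartial : ∀ n, ∑ l ∈ Finset.range (n + 1), x l < 1) {i j : ℕ} (hij : i ≠ j) :
    gemA x i j = x i * x j * (gemC x (min i j) - 1) := by
  wlog h : i < j generalizing i j
  · have hji : j < i := lt_of_le_of_ne (not_lt.mp h) hij.symm
    rw [gemA_symm, this hij.symm hji, min_comm]
    ring
  have hmin : min i j = i := min_eq_left h.le
  have hRpos : 0 < gemR x i := by have := hpartial i; rw [gemR]; linarith
  rw [gemA, hmin, Finset.sum_range_succ]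
  have h1 := gemA_core x hpos i j
  rw [hmin] at h1
  rw [h1, if_pos rfl, if_neg (Nat.ne_of_lt h), gemR_eq]
  have hden : x i * (1 - ∑ l ∈ Finset.range (i+1), x l) = x i * gemR x i := by rw [gemR]
  rw [hden]
  have hne : x i * gemR x i ≠ 0 := mul_ne_zero (hpos i).ne' hRpos.ne'
  have : gemR x i * ((0:ℝ) * (1 - ∑ l ∈ Finset.range i, x l) - x i) / (x i * gemR x i)
      = -1 := by rw [div_eq_iff hne]; ring
  rw [this]
  ring

/-- **Bound on the diffusion coefficients:** for `x ∈ 𝔻̄_∞` with all `x_k > 0` and all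
partial sums `< 1`, one has `∑_{i,j} |a_{ij}(x)| ≤ 3`. -/
theorem gemA_abs_sum_le_three (x : ℕ → ℝ)
    (hpos : ∀ k, 0 < x k)
    (hpartial : ∀ n, ∑ l ∈ Finset.range (n + 1), x l < 1)
    (hsum : ∑' i, x i ≤ 1) :
    Summable (fun p : ℕ × ℕ => |gemA x p.1 p.2|)
    ∧ ∑' p : ℕ × ℕ, |gemA x p.1 p.2| ≤ 3 := by
  have hxnn : ∀ k, 0 ≤ x k := fun k => (hpos k).le
  have hx : Summable x := by
    apply summable_of_sum_range_le hxnn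
    intro n
    exact le_trans (Finset.sum_le_sum_of_subset_of_nonneg
      (Finset.range_subset_range.mpr (Nat.le_succ n)) fun k _ _ => hxnn k) (hpartial n).le
  have hRpos : ∀ k, 0 < gemR x k := fun k => by have := hpartial k; rw [gemR]; linarith
  have hRle1 : ∀ k, gemR x k ≤ 1 := fun k => by
    have : 0 ≤ ∑ l ∈ Finset.range (k+1), x l := Finset.sum_nonneg fun l _ => hxnn l
    rw [gemR]; linarith
  have hCnn : ∀ i, 0 ≤ gemC x i := fun i =>
    Finset.sum_nonneg fun k _ => div_nonneg (hxnn k) (hRpos k).le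
  have hCmono : ∀ {m i : ℕ}, m ≤ i → gemC x m ≤ gemC x i := fun {m i} hmi =>
    Finset.sum_le_sum_of_subset_of_nonneg (Finset.range_subset_range.mpr hmi)
      (fun k _ _ => div_nonneg (hxnn k) (hRpos k).le)
  have hSle : ∀ n, ∑ l ∈ Finset.range n, x l ≤ 1 :=
    fun n => le_trans (Summable.sum_le_tsum _ (fun l _ => hxnn l) hx) hsum
  -- key bound on partial sums of d i = x i * gemC x i
  have hd_bound : ∀ N, ∑ i ∈ Finset.range N, x i * gemC x i ≤ 1 := by
    intro N
    have step1 : ∑ i ∈ Finset.range N, x i * gemC x i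
        = ∑ i ∈ Finset.range N, ∑ k ∈ Finset.range i, (x k / gemR x k) * x i := by
      refine Finset.sum_congr rfl fun i _ => ?_
      rw [gemC, Finset.mul_sum]
      exact Finset.sum_congr rfl fun k _ => mul_comm _ _
    have step2 : ∑ i ∈ Finset.range N, ∑ k ∈ Finset.range i, (x k / gemR x k) * x i
        = ∑ k ∈ Finset.range N, ∑ i ∈ Finset.Ico (k+1) N, (x k / gemR x k) * x i := by
      have := (Finset.sum_Ico_Ico_comm' 0 N fun k i => (x k / gemR x k) * x i).symm
      simpa only [Nat.Ico_zero_eq_range] using this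
    rw [step1, step2]
    calc ∑ k ∈ Finset.range N, ∑ i ∈ Finset.Ico (k+1) N, (x k / gemR x k) * x i
        ≤ ∑ k ∈ Finset.range N, x k := by
          refine Finset.sum_le_sum fun k hk => ?_
          have hkN := Finset.mem_range.mp hk
          rw [← Finset.mul_sum]
          have hIco : ∑ i ∈ Finset.Ico (k+1) N, x i
              = ∑ i ∈ Finset.range N, x i - ∑ i ∈ Finset.range (k+1), x i :=
            Finset.sum_Ico_eq_sub _ hkN
          have h2 : ∑ i ∈ Finset.Ico (k+1) N, x i ≤ gemR x k := by
            rw [hIco, gemR]; have := hSle N; linarith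
          calc x k / gemR x k * ∑ i ∈ Finset.Ico (k+1) N, x i
              ≤ x k / gemR x k * gemR x k :=
                mul_le_mul_of_nonneg_left h2 (div_nonneg (hxnn k) (hRpos k).le)
            _ = x k := div_mul_cancel₀ _ (hRpos k).ne'
      _ ≤ 1 := hSle N
  have hdnn : ∀ i, 0 ≤ x i * gemC x i := fun i => mul_nonneg (hxnn i) (hCnn i)
  have hd : Summable (fun i => x i * gemC x i) := summable_of_sum_range_le hdnn hd_bound
  have hdt : ∑' i, x i * gemC x i ≤ 1 := Real.tsum_le_of_sum_range_le hdnn hd_bound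
  -- the three dominating families
  have hg1 : Summable (fun p : ℕ × ℕ => (x p.1 * gemC x p.1) * x p.2) :=
    hd.mul_of_nonneg hx hdnn hxnn
  have hg2 : Summable (fun p : ℕ × ℕ => x p.1 * x p.2) :=
    hx.mul_of_nonneg hx hxnn hxnn
  have hxt_nn : 0 ≤ ∑' i, x i := tsum_nonneg hxnn
  have hdt_nn : 0 ≤ ∑' i, x i * gemC x i := tsum_nonneg hdnn
  have ht1 : ∑' p : ℕ × ℕ, (x p.1 * gemC x p.1) * x p.2 ≤ 1 := by
    rw [← Summable.tsum_mul_tsum hd hx hg1]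
    calc (∑' i, x i * gemC x i) * ∑' i, x i ≤ 1 * 1 :=
      mul_le_mul hdt hsum hxt_nn zero_le_one
    _ = 1 := by ring
  have ht2 : ∑' p : ℕ × ℕ, x p.1 * x p.2 ≤ 1 := by
    rw [← Summable.tsum_mul_tsum hx hx hg2]
    calc (∑' i, x i) * ∑' i, x i ≤ 1 * 1 := mul_le_mul hsum hsum hxt_nn zero_le_one
    _ = 1 := by ring
  -- diagonal family
  have henn : ∀ i, 0 ≤ x i * gemR x i := fun i => mul_nonneg (hxnn i) (hRpos i).le
  have hele : ∀ i, x i * gemR x i ≤ x i := fun i => by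
    calc x i * gemR x i ≤ x i * 1 := mul_le_mul_of_nonneg_left (hRle1 i) (hxnn i)
    _ = x i := mul_one _
  have he : Summable (fun i => x i * gemR x i) := Summable.of_nonneg_of_le henn hele hx
  have hinj : Function.Injective (fun i : ℕ => ((i, i) : ℕ × ℕ)) := by
    intro a b h
    exact (Prod.ext_iff.mp h).1
  have hvan : ∀ p : ℕ × ℕ, p ∉ Set.range (fun i : ℕ => ((i, i) : ℕ × ℕ)) →
      (if p.1 = p.2 then x p.1 * gemR x p.1 else 0) = 0 := by
    intro p hp
    rw [if_neg]
    intro h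
    exact hp ⟨p.1, by rw [Prod.ext_iff]; exact ⟨rfl, h⟩⟩
  have hg3sum : HasSum (fun p : ℕ × ℕ => if p.1 = p.2 then x p.1 * gemR x p.1 else 0)
      (∑' i, x i * gemR x i) := by
    refine (hinj.hasSum_iff hvan).mp ?_
    simpa [Function.comp_def] using he.hasSum
  have hg3 : Summable (fun p : ℕ × ℕ => if p.1 = p.2 then x p.1 * gemR x p.1 else 0) :=
    hg3sum.summable
  have ht3 : ∑' p : ℕ × ℕ, (if p.1 = p.2 then x p.1 * gemR x p.1 else 0) ≤ 1 := by
    rw [hg3sum.tsum_eq]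
    exact le_trans (Summable.tsum_le_tsum hele he hx) hsum
  -- the dominating function
  set G : ℕ × ℕ → ℝ := fun p => (x p.1 * gemC x p.1) * x p.2 + x p.1 * x p.2 +
    (if p.1 = p.2 then x p.1 * gemR x p.1 else 0) with hGdef
  have hG : Summable G := (hg1.add hg2).add hg3
  have hGt : ∑' p, G p ≤ 3 := by
    rw [hGdef, Summable.tsum_add (hg1.add hg2) hg3, Summable.tsum_add hg1 hg2]
    linarith
  -- pointwise bound
  have habs : ∀ p : ℕ × ℕ, |gemA x p.1 p.2| ≤ G p := by
    rintro ⟨i, j⟩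
    by_cases hij : i = j
    · subst hij
      rw [gemA_diag x hpos hpartial i]
      have h0 : 0 ≤ x i ^ 2 * gemC x i + x i * gemR x i := by
        have := hCnn i
        have := (hRpos i).le
        have := hxnn i
        positivity
      rw [abs_of_nonneg h0]
      simp only [hGdef, if_pos rfl, if_true]
      nlinarith [hxnn i, hCnn i, sq_nonneg (x i), mul_nonneg (hxnn i) (hxnn i)]
    · rw [gemA_off x hpos hpartial hij]
      have hmin : min i j ≤ i := min_le_left _ _
      have h1 : |x i * x j * (gemC x (min i j) - 1)|
          = x i * x j * |gemC x (min i j) - 1| := by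
        rw [abs_mul, abs_of_nonneg (mul_nonneg (hxnn i) (hxnn j))]
      have h2 : |gemC x (min i j) - 1| ≤ gemC x (min i j) + 1 := by
        rw [abs_le]
        constructor <;> [linarith [hCnn (min i j)]; linarith [hCnn (min i j)]]
      have h3 : gemC x (min i j) ≤ gemC x i := hCmono hmin
      simp only [hGdef, if_neg hij]
      have hb : x i * x j * |gemC x (min i j) - 1| ≤ x i * x j * (gemC x i + 1) := by
        apply mul_le_mul_of_nonneg_left _ (mul_nonneg (hxnn i) (hxnn j))
        linarith
      rw [h1]
      calc x i * x j * |gemC x (min i j) - 1| ≤ x i * x j * (gemC x i + 1) := hb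
        _ = (x i * gemC x i) * x j + x i * x j + 0 := by ring
        _ ≤ _ := by simp
  have hS : Summable (fun p : ℕ × ℕ => |gemA x p.1 p.2|) :=
    Summable.of_nonneg_of_le (fun p => abs_nonneg _) habs hG
  exact ⟨hS, le_trans (Summable.tsum_le_tsum habs hS hG) hGt⟩
end

section
/- Let (a_k)_{k≥1}, (b_k)_{k≥1} be sequences of strictly positive reals. For x ∈ [0,1]^ℕ with ∑_{i≥1} x_i ≤ 1, x_k > 0 and ∑_{l=1}^k x_l < 1 for all k, define b_i(x) = x_i ∑_{k=1}^{i} (δ_{ik}(1−∑_{l=1}^{k-1} x_l) − x_k)(a_k(1−∑_{l=1}^{k-1} x_l) − (a_k+b_k) x_k) / (x_k (1−∑_{l=1}^k x_l)). Then |b_i(x)| ≤ ∑_{k=1}^{i} (b_k x_k + a_k) for every i ≥ 1. -/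
open Finset

/-- The drift coefficients of the GEM process with parameter sequences `(a_k), (b_k)`
(indices starting at 0, so index `i` stands for the paper's `i+1`):
`b_i(x) = x_i ∑_{k=1}^{i} (δ_{ik}(1−∑_{l<k}x_l) − x_k)(a_k(1−∑_{l<k}x_l) − (a_k+b_k)x_k)
          / (x_k(1−∑_{l≤k}x_l))`. -/
noncomputable def gemB (a b : ℕ → ℝ) (x : ℕ → ℝ) (i : ℕ) : ℝ :=
  x i * ∑ k ∈ Finset.range (i + 1),
    (((if i = k then (1:ℝ) else 0) * (1 - ∑ l ∈ Finset.range k, x l) - x k) *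
      (a k * (1 - ∑ l ∈ Finset.range k, x l) - (a k + b k) * x k)) /
    (x k * (1 - ∑ l ∈ Finset.range (k + 1), x l))

/-- **Bound on the drift coefficients:** for strictly positive parameters `(a_k), (b_k)`
and `x ∈ 𝔻̄_∞` with all `x_k > 0` and all partial sums `< 1`,
`|b_i(x)| ≤ ∑_{k=1}^{i} (b_k x_k + a_k)` for every `i`. -/
theorem gemB_abs_le (a b : ℕ → ℝ) (ha : ∀ k, 0 < a k) (hb : ∀ k, 0 < b k)
    (x : ℕ → ℝ)
    (hpos : ∀ k, 0 < x k)
    (hpartial : ∀ n, ∑ l ∈ Finset.range (n + 1), x l < 1)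
    (hsum : ∑' i, x i ≤ 1) :
    ∀ i, |gemB a b x i| ≤ ∑ k ∈ Finset.range (i + 1), (b k * x k + a k) := by
  intro i
  have hS0 : ∀ n, (0:ℝ) ≤ ∑ l ∈ Finset.range n, x l := fun n =>
    Finset.sum_nonneg fun l _ => (hpos l).le
  have hD : ∀ k, (0:ℝ) < 1 - ∑ l ∈ Finset.range (k + 1), x l := fun k => by
    linarith [hpartial k]
  have hxi1 : x i ≤ 1 := by
    have h := Finset.single_le_sum (f := x) (fun l _ => (hpos l).le)
      (Finset.self_mem_range_succ i)
    linarith [hpartial i]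
  unfold gemB
  rw [Finset.mul_sum]
  refine (Finset.abs_sum_le_sum_abs _ _).trans (Finset.sum_le_sum fun k hk => ?_)
  rw [Finset.mem_range, Nat.lt_succ_iff] at hk
  have hxk := hpos k
  have hDk := hD k
  rcases eq_or_lt_of_le hk with heq | hlt
  · -- k = i
    subst heq
    rw [Finset.sum_range_succ] at hDk ⊢
    simp only [eq_self_iff_true, if_true, one_mul]
    set s := ∑ l ∈ Finset.range k, x l with hs
    have hE : x k * (((1 - s) - x k) * (a k * (1 - s) - (a k + b k) * x k) /
        (x k * (1 - (s + x k)))) = a k * (1 - (s + x k)) - b k * x k := by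
      have h1 : x k ≠ 0 := hxk.ne'
      have h2 : (1 - (s + x k)) ≠ 0 := hDk.ne'
      field_simp
      ring
    rw [hE, abs_le]
    have hs0 : 0 ≤ s + x k := add_nonneg (hS0 k) hxk.le
    constructor <;> nlinarith [ha k, hb k, hxk, hDk]
  · -- k < i
    have hne : i ≠ k := (Nat.ne_of_lt hlt).symm
    simp only [if_neg hne, zero_mul, zero_sub]
    have hxiD : x i ≤ 1 - ∑ l ∈ Finset.range (k + 1), x l := by
      have hsub : ∑ l ∈ Finset.range (k + 1), x l ≤ ∑ l ∈ Finset.range i, x l :=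
        Finset.sum_le_sum_of_subset_of_nonneg
          (Finset.range_subset_range.mpr hlt) (fun l _ _ => (hpos l).le)
      have hi := hpartial i
      rw [Finset.sum_range_succ] at hi
      linarith
    rw [Finset.sum_range_succ] at hDk hxiD ⊢
    set s := ∑ l ∈ Finset.range k, x l with hs
    have hE : x i * (-x k * (a k * (1 - s) - (a k + b k) * x k) /
        (x k * (1 - (s + x k)))) =
        x i * (b k * x k) / (1 - (s + x k)) - a k * x i := by
      have h1 : x k ≠ 0 := hxk.ne'
      have h2 : (1 - (s + x k)) ≠ 0 := hDk.ne'
      field_simp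
      ring
    rw [hE, abs_le]
    have hfrac0 : 0 ≤ x i * (b k * x k) / (1 - (s + x k)) :=
      div_nonneg (mul_nonneg (hpos i).le (mul_pos (hb k) hxk).le) hDk.le
    have hfrac : x i * (b k * x k) / (1 - (s + x k)) ≤ b k * x k := by
      rw [div_le_iff₀ hDk]
      nlinarith [mul_le_mul_of_nonneg_right hxiD (mul_pos (hb k) hxk).le]
    have hax : a k * x i ≤ a k := by nlinarith [ha k, hpos i]
    have hax0 : 0 ≤ a k * x i := mul_nonneg (ha k).le (hpos i).le
    constructor <;> nlinarith [hb k, hxk]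
end

section
/- Fix n ≥ 1 and let φ^{(n)}(x) = (φ_1(x),…,φ_n(x)) where φ_1(x) = x_1 and φ_k(x) = x_k ∏_{l=1}^{k-1}(1-x_l). Then for every x ∈ (0,1)^n, every 1 ≤ i ≤ n, and every continuously differentiable F : ℝⁿ → ℝ, the chain rule gives ∂/∂x_i (F ∘ φ^{(n)})(x) = ∑_{j=i}^{n} ((δ_{ij} − x_i) φ_j(x) / (x_i(1-x_i))) · (∂F/∂y_j)(φ^{(n)}(x)). -/
open Finset

/-- Partial derivative in the `i`-th coordinate:
`∂_i F (x) = d/dt F(x with i-th coordinate t) at t = x_i`. -/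
noncomputable def pd {n : ℕ} (i : Fin n) (F : (Fin n → ℝ) → ℝ) (x : Fin n → ℝ) : ℝ :=
  deriv (fun t => F (Function.update x i t)) (x i)

/-- The finite stick-breaking map `φ^{(n)}`: `φ_k(x) = x_k ∏_{l<k} (1 - x_l)`. -/
noncomputable def sbFin {n : ℕ} (x : Fin n → ℝ) : Fin n → ℝ :=
  fun k => x k * ∏ l ∈ Finset.Iio k, (1 - x l)

lemma pd_eq_fderiv {n : ℕ} (F : (Fin n → ℝ) → ℝ) (hF : Differentiable ℝ F)
    (j : Fin n) (y : Fin n → ℝ) :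
    pd j F y = fderiv ℝ F y (Pi.single j 1) := by
  have h1 : HasDerivAt (fun t => Function.update y j t) (Pi.single j 1) (y j) := by
    rw [hasDerivAt_pi]
    intro k
    by_cases hk : k = j
    · subst hk
      simpa [Function.update_self] using (hasDerivAt_id' (y k))
    · simpa [Function.update_of_ne hk, Pi.single_eq_of_ne hk] using
        hasDerivAt_const (y j) (y k)
  have h2 := (hF (Function.update y j (y j))).hasFDerivAt.comp_hasDerivAt (y j) h1
  rw [Function.update_eq_self] at h2
  exact h2.deriv

/-- **Chain rule for the stick-breaking map.** For `x ∈ (0,1)^n`, every `i`, and every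
continuously differentiable `F : ℝⁿ → ℝ`,
`∂_i (F ∘ φ^{(n)})(x) = ∑_{j≥i} ((δ_{ij} − x_i) φ_j(x) / (x_i(1-x_i))) ∂_j F(φ^{(n)}(x))`. -/
theorem stickBreak_chain_rule (n : ℕ) (hn : 1 ≤ n)
    (F : (Fin n → ℝ) → ℝ) (hF : ContDiff ℝ 1 F)
    (x : Fin n → ℝ) (hx : ∀ k, x k ∈ Set.Ioo (0:ℝ) 1) (i : Fin n) :
    pd i (fun z => F (sbFin z)) x
      = ∑ j ∈ Finset.Ici i,
          (((if i = j then (1:ℝ) else 0) - x i) * sbFin x j / (x i * (1 - x i)))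
            * pd j F (sbFin x) := by
  have hdiff : Differentiable ℝ F := hF.differentiable one_ne_zero
  obtain ⟨hxi0, hxi1⟩ := hx i
  have hx0 : x i ≠ 0 := ne_of_gt hxi0
  have hx1 : (1 : ℝ) - x i ≠ 0 := by linarith
  set y := sbFin x with hy
  set c : Fin n → ℝ := fun j =>
    if i ≤ j then (((if i = j then (1:ℝ) else 0) - x i) * sbFin x j / (x i * (1 - x i)))
    else 0 with hc
  -- derivative of each coordinate of sbFin ∘ update
  have hcoord : HasDerivAt (fun t => sbFin (Function.update x i t)) c (x i) := by
    rw [hasDerivAt_pi]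
    intro j
    rcases lt_trichotomy j i with hji | hji | hji
    · -- j < i : coordinate is constant
      have hfun : (fun t => sbFin (Function.update x i t) j) = fun _ => sbFin x j := by
        funext t
        simp only [sbFin]
        rw [Function.update_of_ne (ne_of_lt hji)]
        congr 1
        refine Finset.prod_congr rfl fun l hl => ?_
        rw [Function.update_of_ne (ne_of_lt (lt_trans (Finset.mem_Iio.mp hl) hji))]
      have hcj : c j = 0 := by simp [hc, not_le.mpr hji]
      rw [hfun, hcj]
      exact hasDerivAt_const _ _
    · -- j = i
      subst hji
      have hfun : (fun t => sbFin (Function.update x j t) j)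
          = fun t => t * ∏ l ∈ Finset.Iio j, (1 - x l) := by
        funext t
        simp only [sbFin]
        rw [Function.update_self]
        congr 1
        refine Finset.prod_congr rfl fun l hl => ?_
        rw [Function.update_of_ne (ne_of_lt (Finset.mem_Iio.mp hl))]
      have hcj : c j = ∏ l ∈ Finset.Iio j, (1 - x l) := by
        simp only [hc, le_refl, if_true, if_pos rfl, sbFin]
        field_simp
      rw [hfun, hcj]
      simpa using (hasDerivAt_id (x j)).mul_const (∏ l ∈ Finset.Iio j, (1 - x l))
    · -- i < j
      have hij : i ∈ Finset.Iio j := Finset.mem_Iio.mpr hji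
      set P := ∏ l ∈ (Finset.Iio j).erase i, (1 - x l) with hP
      have hfun : (fun t => sbFin (Function.update x i t) j)
          = fun t => x j * ((1 - t) * P) := by
        funext t
        simp only [sbFin]
        rw [Function.update_of_ne (ne_of_gt hji)]
        congr 1
        rw [← Finset.mul_prod_erase _ _ hij, Function.update_self]
        congr 1
        refine Finset.prod_congr rfl fun l hl => ?_
        rw [Function.update_of_ne (Finset.ne_of_mem_erase hl)]
      have hprod : sbFin x j = x j * ((1 - x i) * P) := by
        simp only [sbFin]
        rw [← Finset.mul_prod_erase _ _ hij]
      have hcj : c j = -(x j * P) := by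
        simp only [hc, if_pos hji.le, if_neg (ne_of_lt hji), hprod]
        field_simp
        ring
      rw [hfun, hcj]
      have : HasDerivAt (fun t : ℝ => (1 - t) * P) (-P) (x i) := by
        simpa using ((hasDerivAt_const (x i) (1:ℝ)).sub (hasDerivAt_id (x i))).mul_const P
      simpa [mul_comm, mul_left_comm, mul_assoc] using this.const_mul (x j)
  -- compose with F
  have hupd : sbFin (Function.update x i (x i)) = y := by
    rw [Function.update_eq_self]
  have hcomp : HasDerivAt (fun t => F (sbFin (Function.update x i t)))
      (fderiv ℝ F y c) (x i) := by
    have h := (hdiff (sbFin (Function.update x i (x i)))).hasFDerivAt.comp_hasDerivAt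
      (x i) hcoord
    rw [hupd] at h
    exact h
  have hpd : pd i (fun z => F (sbFin z)) x = fderiv ℝ F y c := hcomp.deriv
  -- expand c as a sum of Pi.single
  have hcsum : (fderiv ℝ F y) c = ∑ j, c j * fderiv ℝ F y (Pi.single j 1) := by
    have hcs : c = ∑ j, c j • (Pi.single j 1 : Fin n → ℝ) := by
      funext k
      rw [Finset.sum_apply]
      simp only [Pi.smul_apply, Pi.single_apply, smul_eq_mul, mul_ite, mul_one, mul_zero]
      rw [Finset.sum_ite_eq]
      simp
    calc (fderiv ℝ F y) c = (fderiv ℝ F y) (∑ j, c j • (Pi.single j 1 : Fin n → ℝ)) := by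
          rw [← hcs]
      _ = ∑ j, c j * fderiv ℝ F y (Pi.single j 1) := by
          rw [map_sum]
          exact Finset.sum_congr rfl fun j _ => by rw [map_smul, smul_eq_mul]
  rw [hpd, hcsum]
  rw [← Finset.sum_subset (Finset.subset_univ (Finset.Ici i))]
  · refine Finset.sum_congr rfl fun j hj => ?_
    rw [← pd_eq_fderiv F hdiff j y]
    simp only [hc, if_pos (Finset.mem_Ici.mp hj)]
    rfl
  · intro j _ hj
    have : ¬ i ≤ j := fun h => hj (Finset.mem_Ici.mpr h)
    simp [hc, this]
end

section
/- Fix n ≥ 1, strictly positive reals a_1,…,a_n, b_1,…,b_n, and let φ^{(n)}(x) = (φ_1(x),…,φ_n(x)) with φ_1(x) = x_1, φ_k(x) = x_k ∏_{l<k}(1-x_l). Let L_n = ∑_{i=1}^n x_i(1-x_i) ∂²/∂x_i² + ∑_{i=1}^n (a_i − (a_i+b_i)x_i) ∂/∂x_i, and for y in the image of (0,1)^n under φ^{(n)} define a_{ij}(y) = y_i y_j ∑_{k=1}^{min(i,j)} (δ_{ki}(1−∑_{l<k} y_l) − y_k)(δ_{kj}(1−∑_{l<k} y_l) − y_k)/(y_k(1−∑_{l≤k}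 y_l)) and b_i(y) = y_i ∑_{k=1}^{i} (δ_{ik}(1−∑_{l<k} y_l) − y_k)(a_k(1−∑_{l<k} y_l) − (a_k+b_k) y_k)/(y_k(1−∑_{l≤k} y_l)). Then for every twice continuously differentiable F : ℝⁿ → ℝ and every x ∈ (0,1)^n, L_n(F∘φ^{(n)})(x) = ∑_{i,j=1}^n a_{ij}(y) (∂²F/∂y_i∂y_j)(y) + ∑_{i=1}^n b_i(y)(∂F/∂y_i)(y), where y = φ^{(n)}(x). That is, the generator 𝓛 of the GEM process is intertwined with the product Wright–Fisher generator via the stick-breaking map. -/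
open Finset

/-- The diffusion matrix of the GEM process. -/
noncomputable def gemAFin {n : ℕ} (y : Fin n → ℝ) (i j : Fin n) : ℝ :=
  y i * y j * ∑ k ∈ Finset.Iic (min i j),
    (((if k = i then (1:ℝ) else 0) * (1 - ∑ l ∈ Finset.Iio k, y l) - y k) *
      ((if k = j then (1:ℝ) else 0) * (1 - ∑ l ∈ Finset.Iio k, y l) - y k)) /
    (y k * (1 - ∑ l ∈ Finset.Iic k, y l))

/-- The drift coefficients of the GEM process with parameters `(a_k), (b_k)`. -/
noncomputable def gemBFin {n : ℕ} (a b : Fin n → ℝ) (y : Fin n → ℝ) (i : Fin n) : ℝ :=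
  y i * ∑ k ∈ Finset.Iic i,
    (((if i = k then (1:ℝ) else 0) * (1 - ∑ l ∈ Finset.Iio k, y l) - y k) *
      (a k * (1 - ∑ l ∈ Finset.Iio k, y l) - (a k + b k) * y k)) /
    (y k * (1 - ∑ l ∈ Finset.Iic k, y l))

/-- Jacobian of the stick-breaking map: `Dmat x k j = ∂(sbFin x)_j / ∂x_k`. -/
noncomputable def Dmat {n : ℕ} (x : Fin n → ℝ) (k j : Fin n) : ℝ :=
  if k = j then ∏ l ∈ Finset.Iio j, (1 - x l)
  else if k < j then -(x j * ∏ l ∈ (Finset.Iio j).erase k, (1 - x l))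
  else 0

lemma Dmat_zero {n : ℕ} (x : Fin n → ℝ) {k j : Fin n} (h : j < k) : Dmat x k j = 0 := by
  unfold Dmat
  rw [if_neg (by omega : ¬ k = j), if_neg (by omega : ¬ k < j)]

lemma Dmat_update {n : ℕ} (x : Fin n → ℝ) (k : Fin n) (t : ℝ) (j : Fin n) :
    Dmat (Function.update x k t) k j = Dmat x k j := by
  unfold Dmat
  rcases eq_or_ne k j with rfl | hkj
  · rw [if_pos rfl, if_pos rfl]
    refine Finset.prod_congr rfl fun l hl => ?_
    rw [Function.update_of_ne (by exact ne_of_lt (Finset.mem_Iio.mp hl)) _ x]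
  · rw [if_neg hkj, if_neg hkj]
    by_cases hlt : k < j
    · rw [if_pos hlt, if_pos hlt, Function.update_of_ne (Ne.symm hkj)]
      congr 1
      congr 1
      refine Finset.prod_congr rfl fun l hl => ?_
      rw [Function.update_of_ne (Finset.ne_of_mem_erase hl)]
    · rw [if_neg hlt, if_neg hlt]

lemma sb_hasDerivAt {n : ℕ} (x : Fin n → ℝ) (k : Fin n) :
    HasDerivAt (fun t => sbFin (Function.update x k t)) (fun j => Dmat x k j) (x k) := by
  rw [hasDerivAt_pi]
  intro j
  unfold sbFin Dmat
  rcases eq_or_ne k j with rfl | hkj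
  · rw [if_pos rfl]
    have heq : (fun t => Function.update x k t k * ∏ l ∈ Finset.Iio k, (1 - Function.update x k t l))
        = fun t => t * ∏ l ∈ Finset.Iio k, (1 - x l) := by
      funext t
      rw [Function.update_self]
      congr 1
      refine Finset.prod_congr rfl fun l hl => ?_
      rw [Function.update_of_ne (ne_of_lt (Finset.mem_Iio.mp hl))]
    rw [heq]
    exact hasDerivAt_mul_const _
  · rw [if_neg hkj]
    by_cases hlt : k < j
    · rw [if_pos hlt]
      have hkmem : k ∈ Finset.Iio j := Finset.mem_Iio.mpr hlt
      have heq : (fun t => Function.update x k t j * ∏ l ∈ Finset.Iio j, (1 - Function.update x k t l))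
          = fun t => x j * ((1 - t) * ∏ l ∈ (Finset.Iio j).erase k, (1 - x l)) := by
        funext t
        have hpr : ∏ l ∈ (Finset.Iio j).erase k, (1 - Function.update x k t l)
            = ∏ l ∈ (Finset.Iio j).erase k, (1 - x l) := by
          refine Finset.prod_congr rfl fun l hl => ?_
          rw [Function.update_of_ne (Finset.ne_of_mem_erase hl)]
        rw [Function.update_of_ne (Ne.symm hkj), ← Finset.mul_prod_erase _ _ hkmem,
          Function.update_self, hpr]
      rw [heq]
      have h1 : HasDerivAt (fun t : ℝ => (1 - t)) (-1) (x k) := by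
        simpa using (hasDerivAt_id (x k)).const_sub 1
      have := ((h1.mul_const (∏ l ∈ (Finset.Iio j).erase k, (1 - x l))).const_mul (x j))
      rw [show -(x j * ∏ l ∈ (Finset.Iio j).erase k, (1 - x l))
        = x j * (-1 * ∏ l ∈ (Finset.Iio j).erase k, (1 - x l)) by ring]
      exact this
    · rw [if_neg hlt]
      have heq : (fun t => Function.update x k t j * ∏ l ∈ Finset.Iio j, (1 - Function.update x k t l))
          = fun _ => x j * ∏ l ∈ Finset.Iio j, (1 - x l) := by
        funext t
        rw [Function.update_of_ne (Ne.symm hkj)]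
        congr 1
        refine Finset.prod_congr rfl fun l hl => ?_
        have hl' : l < j := Finset.mem_Iio.mp hl
        rw [Function.update_of_ne (by omega : l ≠ k)]
      rw [heq]
      exact hasDerivAt_const _ _

lemma pd_eq_fderiv_s12 {n : ℕ} {G : (Fin n → ℝ) → ℝ} {x : Fin n → ℝ}
    (h : DifferentiableAt ℝ G x) (i : Fin n) :
    pd i G x = fderiv ℝ G x (Pi.single i 1) := by
  have hc : HasDerivAt (fun t => Function.update x i t) (Pi.single i 1) (x i) :=
    hasDerivAt_update x i (x i)
  have h2 : HasFDerivAt G (fderiv ℝ G x) (Function.update x i (x i)) := by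
    rw [Function.update_eq_self]; exact h.hasFDerivAt
  exact (h2.comp_hasDerivAt (x i) hc).deriv

lemma fderiv_apply_sum {n : ℕ} (L : (Fin n → ℝ) →L[ℝ] ℝ) (v : Fin n → ℝ) :
    L v = ∑ j, v j * L (Pi.single j 1) := by
  have hv : v = ∑ j, v j • (Pi.single j 1 : Fin n → ℝ) := by
    funext l
    simp [Pi.single_apply]
  conv_lhs => rw [hv]
  rw [map_sum]
  exact Finset.sum_congr rfl fun j _ => by rw [map_smul]; rfl

lemma chain_hasDerivAt {n : ℕ} {G : (Fin n → ℝ) → ℝ} (hG : Differentiable ℝ G)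
    (x : Fin n → ℝ) (k : Fin n) :
    HasDerivAt (fun t => G (sbFin (Function.update x k t)))
      (∑ j, pd j G (sbFin x) * Dmat x k j) (x k) := by
  have h1 := sb_hasDerivAt x k
  have h2 : HasFDerivAt G (fderiv ℝ G (sbFin x)) (sbFin (Function.update x k (x k))) := by
    rw [Function.update_eq_self]; exact (hG _).hasFDerivAt
  have h3 := h2.comp_hasDerivAt (x k) h1
  refine h3.congr_deriv ?_
  rw [fderiv_apply_sum]
  exact Finset.sum_congr rfl fun j _ => by
    rw [pd_eq_fderiv_s12 (hG _) j, mul_comm]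

lemma pd_chain {n : ℕ} {G : (Fin n → ℝ) → ℝ} (hG : Differentiable ℝ G)
    (x : Fin n → ℝ) (k : Fin n) :
    pd k (fun z => G (sbFin z)) x = ∑ j, pd j G (sbFin x) * Dmat x k j :=
  (chain_hasDerivAt hG x k).deriv

lemma stick_aux {n : ℕ} (x : Fin n → ℝ) :
    ∀ m : ℕ, ∀ k : Fin n, (k : ℕ) = m →
      ∑ l ∈ Finset.Iio k, (x l * ∏ j ∈ Finset.Iio l, (1 - x j))
        = 1 - ∏ l ∈ Finset.Iio k, (1 - x l) := by
  intro m
  induction m with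
  | zero =>
    intro k hk
    have : Finset.Iio k = ∅ := by
      ext l; simp only [Finset.mem_Iio, Finset.notMem_empty, iff_false]
      intro h; have := Fin.lt_def.mp h; omega
    simp [this]
  | succ m ih =>
    intro k hk
    have hmn : m < n := by have := k.isLt; omega
    set k' : Fin n := ⟨m, hmn⟩ with hk'
    have hIio : Finset.Iio k = insert k' (Finset.Iio k') := by
      ext l
      simp only [Finset.mem_Iio, Finset.mem_insert, Fin.lt_def, hk, Fin.ext_iff, Fin.val_mk]
      have : (k' : ℕ) = m := rfl
      omega
    have hnm : k' ∉ Finset.Iio k' := by simp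
    rw [hIio, Finset.sum_insert hnm, Finset.prod_insert hnm, ih k' rfl]
    ring

lemma stick {n : ℕ} (x : Fin n → ℝ) (k : Fin n) :
    ∑ l ∈ Finset.Iio k, sbFin x l = 1 - ∏ l ∈ Finset.Iio k, (1 - x l) :=
  stick_aux x k k rfl

lemma stick_Iic {n : ℕ} (x : Fin n → ℝ) (k : Fin n) :
    ∑ l ∈ Finset.Iic k, sbFin x l = 1 - (∏ l ∈ Finset.Iio k, (1 - x l)) * (1 - x k) := by
  rw [← Finset.Iio_insert, Finset.sum_insert (by simp), stick]
  show x k * _ + _ = _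
  ring

lemma Dmat_lt {n : ℕ} (x : Fin n → ℝ) {k j : Fin n} (h : k < j) (hne : (1:ℝ) - x k ≠ 0) :
    Dmat x k j = -(sbFin x j) / (1 - x k) := by
  rw [eq_div_iff hne]
  unfold Dmat sbFin
  rw [if_neg (ne_of_lt h), if_pos h,
    ← Finset.mul_prod_erase _ _ (Finset.mem_Iio.mpr h)]
  ring

lemma Dmat_diag {n : ℕ} (x : Fin n → ℝ) (k : Fin n) :
    Dmat x k k = ∏ l ∈ Finset.Iio k, (1 - x l) := if_pos rfl

lemma identA {n : ℕ} (x : Fin n → ℝ) (hx : ∀ k, x k ∈ Set.Ioo (0:ℝ) 1) (m j : Fin n) :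
    ∑ i, x i * (1 - x i) * (Dmat x i m * Dmat x i j) = gemAFin (sbFin x) m j := by
  have hsub : ∑ i, x i * (1 - x i) * (Dmat x i m * Dmat x i j)
      = ∑ i ∈ Finset.Iic (min m j), x i * (1 - x i) * (Dmat x i m * Dmat x i j) := by
    refine (Finset.sum_subset (Finset.subset_univ _) fun i _ hi => ?_).symm
    rcases (not_and_or.mp (fun h => hi (Finset.mem_Iic.mpr (le_min h.1 h.2)))) with h | h
    · rw [Dmat_zero x (lt_of_not_ge h)]; ring
    · rw [Dmat_zero x (lt_of_not_ge h)]; ring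
  rw [hsub]
  unfold gemAFin
  rw [Finset.mul_sum]
  refine Finset.sum_congr rfl fun k hk => ?_
  have hkm : k ≤ m := le_trans (Finset.mem_Iic.mp hk) (min_le_left _ _)
  have hkj : k ≤ j := le_trans (Finset.mem_Iic.mp hk) (min_le_right _ _)
  have hxk := hx k
  have hP : (0:ℝ) < ∏ l ∈ Finset.Iio k, (1 - x l) :=
    Finset.prod_pos fun l _ => by linarith [(hx l).2]
  set P := ∏ l ∈ Finset.Iio k, (1 - x l) with hPdef
  have h1 : (1:ℝ) - ∑ l ∈ Finset.Iio k, sbFin x l = P := by rw [stick]; ring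
  have h2 : (1:ℝ) - ∑ l ∈ Finset.Iic k, sbFin x l = P * (1 - x k) := by rw [stick_Iic]; ring
  have hyk : sbFin x k = x k * P := rfl
  have hne1 : (1:ℝ) - x k ≠ 0 := by linarith [hxk.2]
  have hne2 : x k ≠ 0 := ne_of_gt hxk.1
  have hne3 : P ≠ 0 := ne_of_gt hP
  rw [h1, h2, hyk]
  rcases eq_or_lt_of_le hkm with rfl | hlm
  · rcases eq_or_lt_of_le hkj with rfl | hlj
    · rw [Dmat_diag, if_pos rfl, ← hPdef, hyk]
      field_simp
    · rw [Dmat_diag, ← hPdef, Dmat_lt x hlj hne1, if_pos rfl, if_neg (ne_of_lt hlj)]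
      rw [hyk]
      field_simp
      ring
  · rcases eq_or_lt_of_le hkj with rfl | hlj
    · rw [Dmat_diag, ← hPdef, Dmat_lt x hlm hne1, if_pos rfl, if_neg (ne_of_lt hlm)]
      rw [hyk]
      field_simp
      ring
    · rw [Dmat_lt x hlm hne1, Dmat_lt x hlj hne1, if_neg (ne_of_lt hlm), if_neg (ne_of_lt hlj)]
      field_simp
      ring

lemma identB {n : ℕ} (a b : Fin n → ℝ) (x : Fin n → ℝ)
    (hx : ∀ k, x k ∈ Set.Ioo (0:ℝ) 1) (j : Fin n) :
    ∑ i, (a i - (a i + b i) * x i) * Dmat x i j = gemBFin a b (sbFin x) j := by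
  have hsub : ∑ i, (a i - (a i + b i) * x i) * Dmat x i j
      = ∑ i ∈ Finset.Iic j, (a i - (a i + b i) * x i) * Dmat x i j := by
    refine (Finset.sum_subset (Finset.subset_univ _) fun i _ hi => ?_).symm
    rw [Dmat_zero x (lt_of_not_ge fun h => hi (Finset.mem_Iic.mpr h))]; ring
  rw [hsub]
  unfold gemBFin
  rw [Finset.mul_sum]
  refine Finset.sum_congr rfl fun k hk => ?_
  have hkj : k ≤ j := Finset.mem_Iic.mp hk
  have hxk := hx k
  have hP : (0:ℝ) < ∏ l ∈ Finset.Iio k, (1 - x l) :=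
    Finset.prod_pos fun l _ => by linarith [(hx l).2]
  set P := ∏ l ∈ Finset.Iio k, (1 - x l) with hPdef
  have h1 : (1:ℝ) - ∑ l ∈ Finset.Iio k, sbFin x l = P := by rw [stick]; ring
  have h2 : (1:ℝ) - ∑ l ∈ Finset.Iic k, sbFin x l = P * (1 - x k) := by rw [stick_Iic]; ring
  have hyk : sbFin x k = x k * P := rfl
  have hne1 : (1:ℝ) - x k ≠ 0 := by linarith [hxk.2]
  have hne2 : x k ≠ 0 := ne_of_gt hxk.1
  have hne3 : P ≠ 0 := ne_of_gt hP
  rw [h1, h2, hyk]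
  rcases eq_or_lt_of_le hkj with rfl | hlj
  · rw [Dmat_diag, ← hPdef, if_pos rfl, hyk]
    field_simp
  · rw [Dmat_lt x hlj hne1, if_neg (Ne.symm (ne_of_lt hlj))]
    field_simp
    ring

lemma pd_diff_of_contDiff {n : ℕ} {F : (Fin n → ℝ) → ℝ} (hF : ContDiff ℝ 2 F) (j : Fin n) :
    Differentiable ℝ (fun y => pd j F y) := by
  have hF1 : Differentiable ℝ F := hF.differentiable (by norm_num)
  have hfd : ContDiff ℝ 1 (fun y => fderiv ℝ F y) := hF.fderiv_right (by norm_num)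
  have heq : (fun y => pd j F y)
      = fun y => (ContinuousLinearMap.apply ℝ ℝ (Pi.single j 1 : Fin n → ℝ)) (fderiv ℝ F y) :=
    funext fun y => pd_eq_fderiv_s12 (hF1 y) j
  rw [heq]
  exact (ContinuousLinearMap.apply ℝ ℝ _).differentiable.comp (hfd.differentiable (by norm_num))

/-- **The GEM generator is intertwined with the product Wright–Fisher generator via the
stick-breaking map.** For `C²` functions `F : ℝⁿ → ℝ` and `x ∈ (0,1)^n`, with
`y = φ^{(n)}(x)`:
`L_n(F∘φ^{(n)})(x) = ∑_{i,j} a_{ij}(y) ∂²_{ij}F(y) + ∑_i b_i(y) ∂_iF(y)`, where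
`L_n = ∑_i x_i(1-x_i)∂²_i + ∑_i (a_i − (a_i+b_i)x_i)∂_i`. -/
theorem stickBreak_generator_intertwining (n : ℕ) (hn : 1 ≤ n)
    (a b : Fin n → ℝ) (ha : ∀ i, 0 < a i) (hb : ∀ i, 0 < b i)
    (F : (Fin n → ℝ) → ℝ) (hF : ContDiff ℝ 2 F)
    (x : Fin n → ℝ) (hx : ∀ k, x k ∈ Set.Ioo (0:ℝ) 1) :
    (∑ i, x i * (1 - x i) * pd i (fun z => pd i (fun w => F (sbFin w)) z) x)
      + (∑ i, (a i - (a i + b i) * x i) * pd i (fun z => F (sbFin z)) x)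
    = (∑ i, ∑ j, gemAFin (sbFin x) i j * pd i (fun z => pd j F z) (sbFin x))
      + ∑ i, gemBFin a b (sbFin x) i * pd i F (sbFin x) := by
  have hF1 : Differentiable ℝ F := hF.differentiable (by norm_num)
  have hpd : ∀ j, Differentiable ℝ (fun y => pd j F y) := pd_diff_of_contDiff hF
  -- first-order chain rule
  have hfirst : ∀ i, pd i (fun z => F (sbFin z)) x
      = ∑ j, pd j F (sbFin x) * Dmat x i j := fun i => pd_chain hF1 x i
  -- second-order chain rule
  have hsecond : ∀ i, pd i (fun z => pd i (fun w => F (sbFin w)) z) x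
      = ∑ j, (∑ m, pd m (fun z => pd j F z) (sbFin x) * Dmat x i m) * Dmat x i j := by
    intro i
    have hinner : (fun z => pd i (fun w => F (sbFin w)) z)
        = fun z => ∑ j, pd j F (sbFin z) * Dmat z i j :=
      funext fun z => pd_chain hF1 z i
    rw [hinner]
    show deriv (fun t => ∑ j, pd j F (sbFin (Function.update x i t))
        * Dmat (Function.update x i t) i j) (x i) = _
    have hfun : (fun t => ∑ j, pd j F (sbFin (Function.update x i t))
          * Dmat (Function.update x i t) i j)
        = fun t => ∑ j, pd j F (sbFin (Function.update x i t)) * Dmat x i j := by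
      funext t
      exact Finset.sum_congr rfl fun j _ => by rw [Dmat_update]
    rw [hfun]
    refine HasDerivAt.deriv ?_
    exact HasDerivAt.fun_sum fun j _ =>
      (chain_hasDerivAt (hpd j) x i).mul_const (Dmat x i j)
  simp only [hsecond, hfirst]
  have term1 : ∑ i, x i * (1 - x i)
        * ∑ j, (∑ m, pd m (fun z => pd j F z) (sbFin x) * Dmat x i m) * Dmat x i j
      = ∑ i, ∑ j, gemAFin (sbFin x) i j * pd i (fun z => pd j F z) (sbFin x) := by
    calc ∑ i, x i * (1 - x i)
          * ∑ j, (∑ m, pd m (fun z => pd j F z) (sbFin x) * Dmat x i m) * Dmat x i j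
        = ∑ i, ∑ m, ∑ j, (x i * (1 - x i) * (Dmat x i m * Dmat x i j))
            * pd m (fun z => pd j F z) (sbFin x) := by
          refine Finset.sum_congr rfl fun i _ => ?_
          rw [Finset.mul_sum]
          refine (Finset.sum_congr rfl fun j _ => ?_).trans Finset.sum_comm
          rw [Finset.sum_mul, Finset.mul_sum]
          exact Finset.sum_congr rfl fun m _ => by ring
      _ = ∑ m, ∑ j, (∑ i, x i * (1 - x i) * (Dmat x i m * Dmat x i j))
            * pd m (fun z => pd j F z) (sbFin x) := by
          rw [Finset.sum_comm]
          refine Finset.sum_congr rfl fun m _ => ?_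
          rw [Finset.sum_comm]
          refine Finset.sum_congr rfl fun j _ => ?_
          rw [Finset.sum_mul]
      _ = ∑ m, ∑ j, gemAFin (sbFin x) m j * pd m (fun z => pd j F z) (sbFin x) := by
          refine Finset.sum_congr rfl fun m _ => Finset.sum_congr rfl fun j _ => ?_
          rw [identA x hx m j]
  have term2 : ∑ i, (a i - (a i + b i) * x i) * ∑ j, pd j F (sbFin x) * Dmat x i j
      = ∑ i, gemBFin a b (sbFin x) i * pd i F (sbFin x) := by
    calc ∑ i, (a i - (a i + b i) * x i) * ∑ j, pd j F (sbFin x) * Dmat x i j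
        = ∑ i, ∑ j, ((a i - (a i + b i) * x i) * Dmat x i j) * pd j F (sbFin x) := by
          refine Finset.sum_congr rfl fun i _ => ?_
          rw [Finset.mul_sum]
          exact Finset.sum_congr rfl fun j _ => by ring
      _ = ∑ j, (∑ i, (a i - (a i + b i) * x i) * Dmat x i j) * pd j F (sbFin x) := by
          rw [Finset.sum_comm]
          exact Finset.sum_congr rfl fun j _ => by rw [Finset.sum_mul]
      _ = ∑ j, gemBFin a b (sbFin x) j * pd j F (sbFin x) := by
          refine Finset.sum_congr rfl fun j _ => ?_
          rw [identB a b x hx j]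
  rw [term1, term2]
end
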